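/- arXiv:1710.05185 — 5 statements merged into one kernel-verified Lean document; each statement's English description precedes it below -/
import Mathlib

section
/- Let H be a horizontal trajectory with n ≥ 1 edges, each of positive length (i.e., (p_{i−1}).1 ≠ (p_i).1 for all 1 ≤ i ≤ n), and fix a side length s > 0. Then there exist (x, y) ∈ ℝ² and an index j ∈ {0, …, n} such that w_H(x, y) = h(H), the x-coordinate (p_j).1 of the vertex p_j equals x or x + s, and y ≤ (p_j).2 ≤ y + s; that is, some square of maximum weight has a vertex of H on one of its two closed vertical sides. -/
open MeasureTheory Set
open scoped ENNReal

/-- `Square s x y` is the axis-parallel square `[x, x+s] × [y, y+s]`. -/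
def Square (s x y : ℝ) : Set (ℝ × ℝ) := Icc x (x + s) ×ˢ Icc y (y + s)

/-- The weight of `Square s x y` with respect to a trajectory `T` on `[t0, tn]`:
the Lebesgue measure of `{t ∈ [t0, tn] : T t ∈ Square s x y}`. -/
noncomputable def wgt (s t0 tn : ℝ) (T : ℝ → ℝ × ℝ) (x y : ℝ) : ℝ≥0∞ :=
  volume {τ ∈ Icc t0 tn | T τ ∈ Square s x y}


lemma pl_max (K : Finset ℝ) (hK : K.Nonempty) (g : ℝ → ℝ) (L R : ℝ)
    (haff : ∀ c d : ℝ, c < d → (∀ k ∈ K, k ∉ Ioo c d) →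
      ∃ α β : ℝ, ∀ x ∈ Icc c d, g x = α * x + β)
    (h0r : ∀ x, R ≤ x → g x = 0) (h0l : ∀ x, x ≤ L → g x = 0) :
    ∃ k ∈ K, ∀ x, g x ≤ g k := by
  obtain ⟨k0, hk0K, hk0⟩ := K.exists_max_image g hK
  refine ⟨k0, hk0K, fun x => ?_⟩
  set M := K.max' hK with hM
  set m := K.min' hK with hm
  have hMK : M ∈ K := K.max'_mem hK
  have hmK : m ∈ K := K.min'_mem hK
  -- right zero zone
  have hright : ∀ x, M ≤ x → g x = 0 := by
    intro x hx
    set z0 : ℝ := max (max M R) x + 1 with hz0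
    have hMz0 : M < z0 := by
      have := le_max_left (max M R) x
      have := le_max_left M R
      simp only [hz0]; linarith
    have hxz0 : x < z0 := by
      have := le_max_right (max M R) x; simp only [hz0]; linarith
    have hRz0 : R ≤ z0 := by
      have := le_max_right M R; have := le_max_left (max M R) x; simp only [hz0]; linarith
    obtain ⟨α, β, hαβ⟩ := haff M (z0 + 1) (by linarith)
      (fun k hk hmem => absurd hmem.1 (not_lt.2 (K.le_max' k hk)))
    have h1 : g z0 = α * z0 + β := hαβ z0 ⟨hMz0.le, by linarith⟩
    have h2 : g (z0 + 1) = α * (z0 + 1) + β := hαβ (z0 + 1) ⟨by linarith, le_refl _⟩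
    rw [h0r z0 hRz0] at h1
    rw [h0r (z0 + 1) (by linarith)] at h2
    have hα : α = 0 := by linarith
    have hβ : β = 0 := by rw [hα] at h1; linarith
    have := hαβ x ⟨hx, by linarith⟩
    rw [this, hα, hβ]; ring
  have hleft : ∀ x, x ≤ m → g x = 0 := by
    intro x hx
    set z0 : ℝ := min (min m L) x - 1 with hz0
    have hmz0 : z0 < m := by
      have := min_le_left (min m L) x; have := min_le_left m L; simp only [hz0]; linarith
    have hxz0 : z0 < x := by
      have := min_le_right (min m L) x; simp only [hz0]; linarith
    have hLz0 : z0 ≤ L := by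
      have := min_le_right m L; have := min_le_left (min m L) x; simp only [hz0]; linarith
    obtain ⟨α, β, hαβ⟩ := haff (z0 - 1) m (by linarith)
      (fun k hk hmem => absurd hmem.2 (not_lt.2 (K.min'_le k hk)))
    have h1 : g z0 = α * z0 + β := hαβ z0 ⟨by linarith, hmz0.le⟩
    have h2 : g (z0 - 1) = α * (z0 - 1) + β := hαβ (z0 - 1) ⟨le_refl _, by linarith⟩
    rw [h0l z0 hLz0] at h1
    rw [h0l (z0 - 1) (by linarith)] at h2
    have hα : α = 0 := by linarith
    have hβ : β = 0 := by rw [hα] at h1; linarith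
    have := hαβ x ⟨by linarith, hx⟩
    rw [this, hα, hβ]; ring
  have hg0 : 0 ≤ g k0 := by
    have := hright M le_rfl
    have := hk0 M hMK
    linarith
  by_cases hxK : x ∈ K
  · exact hk0 x hxK
  rcases le_or_gt x m with hxm | hxm
  · rw [hleft x hxm]; exact hg0
  rcases le_or_gt M x with hMx | hMx
  · rw [hright x hMx]; exact hg0
  -- middle zone: m < x < M, x ∉ K
  have hne1 : (K.filter (fun k => k ≤ x)).Nonempty := ⟨m, Finset.mem_filter.2 ⟨hmK, hxm.le⟩⟩
  have hne2 : (K.filter (fun k => x ≤ k)).Nonempty := ⟨M, Finset.mem_filter.2 ⟨hMK, hMx.le⟩⟩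
  set c := (K.filter (fun k => k ≤ x)).max' hne1 with hc
  set d := (K.filter (fun k => x ≤ k)).min' hne2 with hd
  have hcK : c ∈ K := (Finset.mem_filter.1 ((K.filter _).max'_mem hne1)).1
  have hdK : d ∈ K := (Finset.mem_filter.1 ((K.filter _).min'_mem hne2)).1
  have hcx : c ≤ x := (Finset.mem_filter.1 ((K.filter _).max'_mem hne1)).2
  have hxd : x ≤ d := (Finset.mem_filter.1 ((K.filter _).min'_mem hne2)).2
  have hcx' : c < x := lt_of_le_of_ne hcx (fun h => hxK (h ▸ hcK))
  have hxd' : x < d := lt_of_le_of_ne hxd (fun h => hxK (h ▸ hdK))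
  have hdisj : ∀ k ∈ K, k ∉ Ioo c d := by
    intro k hk hmem
    rcases le_or_gt k x with h | h
    · exact absurd ((K.filter (fun k => k ≤ x)).le_max' k (Finset.mem_filter.2 ⟨hk, h⟩))
        (not_le.2 hmem.1)
    · exact absurd ((K.filter (fun k => x ≤ k)).min'_le k (Finset.mem_filter.2 ⟨hk, h.le⟩))
        (not_le.2 hmem.2)
  obtain ⟨α, β, hαβ⟩ := haff c d (hcx'.trans hxd') hdisj
  · have hgx : g x = α * x + β := hαβ x ⟨hcx, hxd⟩
    have hgc : g c = α * c + β := hαβ c ⟨le_refl _, by linarith⟩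
    have hgd : g d = α * d + β := hαβ d ⟨by linarith, le_refl _⟩
    rcases le_or_gt 0 α with hα | hα
    · have : g x ≤ g d := by rw [hgx, hgd]; nlinarith
      exact this.trans (hk0 d hdK)
    · have : g x ≤ g c := by rw [hgx, hgc]; nlinarith
      exact this.trans (hk0 c hcK)

lemma ofReal_max0 (r : ℝ) : ENNReal.ofReal r = ENNReal.ofReal (max 0 r) := by
  rcases le_total r 0 with h | h
  · rw [max_eq_left h, ENNReal.ofReal_of_nonpos h, ENNReal.ofReal_zero]
  · rw [max_eq_right h]

lemma vol_seg_lt (u v a b x s : ℝ) (huv : u < v) (hab : a < b) :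
    volume (Icc u v ∩ {τ | a + ((τ - u) / (v - u)) * (b - a) ∈ Icc x (x + s)}) =
      ENNReal.ofReal ((v - u) / (b - a) * max 0 (min (x + s) b - max x a)) := by
  have hvu : (0:ℝ) < v - u := by linarith
  have hba : (0:ℝ) < b - a := by linarith
  set κ := (v - u) / (b - a) with hκ
  have hκpos : 0 < κ := div_pos hvu hba
  have hκba : κ * (b - a) = v - u := div_mul_cancel₀ _ (ne_of_gt hba)
  set k := (b - a) / (v - u) with hk
  have hkpos : 0 < k := div_pos hba hvu
  set C := a - u * k with hC
  have hform : ∀ τ : ℝ, a + ((τ - u) / (v - u)) * (b - a) = τ * k + C := by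
    intro τ
    rw [hC, hk]
    field_simp
    ring
  set P := u + (x - a) * κ with hP
  set Q := u + (x + s - a) * κ with hQ
  have hPk : (x - C) / k = P := by
    rw [hC, hP, hκ, hk]
    field_simp
    ring
  have hQk : (x + s - C) / k = Q := by
    rw [hC, hQ, hκ, hk]
    field_simp
    ring
  have hset : Icc u v ∩ {τ | a + ((τ - u) / (v - u)) * (b - a) ∈ Icc x (x + s)}
      = Icc (max u P) (min v Q) := by
    have : {τ : ℝ | a + ((τ - u) / (v - u)) * (b - a) ∈ Icc x (x + s)}
        = (fun τ : ℝ => τ * k + C) ⁻¹' Icc x (x + s) := by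
      ext τ; simp only [mem_setOf_eq, mem_preimage, hform]
    rw [this]
    rw [show (fun τ : ℝ => τ * k + C) ⁻¹' Icc x (x + s)
        = (fun τ : ℝ => τ * k) ⁻¹' ((fun z : ℝ => z + C) ⁻¹' Icc x (x + s)) from rfl]
    rw [preimage_add_const_Icc, preimage_mul_const_Icc₀ _ _ hkpos, hPk, hQk, Icc_inter_Icc]
  rw [hset, Real.volume_Icc, ofReal_max0]
  congr 1
  rw [show κ * max 0 (min (x + s) b - max x a) = max (κ * 0) (κ * (min (x + s) b - max x a))
      from (mul_max_of_nonneg _ _ hκpos.le), mul_zero]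
  congr 1
  -- comparison iffs
  have hvQ : v ≤ Q ↔ b ≤ x + s := by
    rw [hQ, hκ, show (x + s - a) * ((v - u) / (b - a)) = (x + s - a) * (v - u) / (b - a) by ring,
      ← sub_le_iff_le_add', le_div_iff₀ hba]
    constructor <;> intro h <;> nlinarith
  have hQv : Q ≤ v ↔ x + s ≤ b := by
    rw [hQ, hκ, show (x + s - a) * ((v - u) / (b - a)) = (x + s - a) * (v - u) / (b - a) by ring,
      ← le_sub_iff_add_le', div_le_iff₀ hba]
    constructor <;> intro h <;> nlinarith
  have huP : u ≤ P ↔ a ≤ x := by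
    rw [hP, hκ]
    constructor <;> intro h <;> nlinarith [mul_pos hvu hba, mul_le_mul_of_nonneg_right
      (le_refl (0:ℝ)) (le_refl (0:ℝ))]
  have hPu : P ≤ u ↔ x ≤ a := by
    rw [hP, hκ]
    constructor <;> intro h <;> nlinarith [mul_pos hvu hba]
  rcases le_total v Q with h1 | h1 <;> rcases le_total u P with h2 | h2
  · rw [min_eq_left h1, max_eq_right h2, min_eq_right (hvQ.1 h1), max_eq_left (huP.1 h2), hP]
    linear_combination -hκba
  · rw [min_eq_left h1, max_eq_left h2, min_eq_right (hvQ.1 h1), max_eq_right (hPu.1 h2)]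
    linear_combination -hκba
  · rw [min_eq_right h1, max_eq_right h2, min_eq_left (hQv.1 h1), max_eq_left (huP.1 h2), hP, hQ]
    ring
  · rw [min_eq_right h1, max_eq_left h2, min_eq_left (hQv.1 h1), max_eq_right (hPu.1 h2), hQ]
    ring

lemma vol_seg (u v a b x s : ℝ) (huv : u < v) (hab : a ≠ b) :
    volume (Icc u v ∩ {τ | a + ((τ - u) / (v - u)) * (b - a) ∈ Icc x (x + s)}) =
      ENNReal.ofReal ((v - u) / (max a b - min a b) *
        max 0 (min (x + s) (max a b) - max x (min a b))) := by
  rcases lt_or_gt_of_ne hab with h | h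
  · rw [max_eq_right h.le, min_eq_left h.le]
    exact vol_seg_lt u v a b x s huv h
  · rw [max_eq_left h.le, min_eq_right h.le]
    have hrefl : Icc u v ∩ {τ | a + ((τ - u) / (v - u)) * (b - a) ∈ Icc x (x + s)}
        = (fun τ => u + v - τ) ⁻¹'
          (Icc u v ∩ {τ | b + ((τ - u) / (v - u)) * (a - b) ∈ Icc x (x + s)}) := by
      have hvu : v - u ≠ 0 := by intro h'; linarith
      ext τ
      simp only [mem_inter_iff, mem_Icc, mem_setOf_eq, mem_preimage]
      have key : b + ((u + v - τ - u) / (v - u)) * (a - b)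
          = a + ((τ - u) / (v - u)) * (b - a) := by
        field_simp
        ring
      rw [key]
      constructor
      · rintro ⟨⟨h1, h2⟩, h3⟩
        exact ⟨⟨by linarith, by linarith⟩, h3⟩
      · rintro ⟨⟨h1, h2⟩, h3⟩
        exact ⟨⟨by linarith, by linarith⟩, h3⟩
    rw [hrefl]
    have hmeas : MeasurableSet (Icc u v ∩ {τ : ℝ | b + ((τ - u) / (v - u)) * (a - b) ∈ Icc x (x + s)}) := by
      apply measurableSet_Icc.inter
      have : Continuous fun τ : ℝ => b + ((τ - u) / (v - u)) * (a - b) := by fun_prop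
      exact this.measurable measurableSet_Icc
    rw [show (fun τ : ℝ => u + v - τ) = (fun τ : ℝ => (u + v) - τ) from rfl]
    rw [(MeasureTheory.Measure.measurePreserving_sub_left volume (u + v)).measure_preimage
      hmeas.nullMeasurableSet]
    exact vol_seg_lt u v b a x s huv h

lemma icc_cover (n : ℕ) (hn : 1 ≤ n) (t : Fin (n + 1) → ℝ) (ht : Monotone t) :
    Icc (t 0) (t (Fin.last n)) = ⋃ i : Fin n, Icc (t i.castSucc) (t i.succ) := by
  apply Subset.antisymm
  · intro τ hτ
    obtain ⟨h0, h1⟩ := hτ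
    classical
    have hne : (Finset.univ.filter (fun i : Fin (n + 1) => t i ≤ τ)).Nonempty :=
      ⟨0, Finset.mem_filter.2 ⟨Finset.mem_univ _, h0⟩⟩
    set i0 := (Finset.univ.filter (fun i : Fin (n + 1) => t i ≤ τ)).max' hne with hi0
    have hi0mem : t i0 ≤ τ :=
      (Finset.mem_filter.1 ((Finset.univ.filter _).max'_mem hne)).2
    by_cases hlast : i0 = Fin.last n
    · -- τ = t (last n)
      have hτeq : τ = t (Fin.last n) := le_antisymm h1 (hlast ▸ hi0mem)
      subst hτeq
      refine mem_iUnion.2 ⟨⟨n - 1, by omega⟩, ?_, ?_⟩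
      · apply ht
        simp [Fin.le_def]
      · apply ht
        simp [Fin.le_def, Fin.succ]
        omega
    · have hi0lt : (i0 : ℕ) < n := by
        have := i0.isLt
        rcases Nat.lt_or_ge (i0 : ℕ) n with h | h
        · exact h
        · exact absurd (Fin.ext (by omega : (i0 : ℕ) = n)) hlast
      set i : Fin n := ⟨(i0 : ℕ), hi0lt⟩ with hi
      have hcs : i.castSucc = i0 := by
        apply Fin.ext; simp [hi]
      have hsucc : τ ≤ t i.succ := by
        by_contra hcon
        push_neg at hcon
        have hmem : i.succ ∈ Finset.univ.filter (fun j : Fin (n + 1) => t j ≤ τ) :=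
          Finset.mem_filter.2 ⟨Finset.mem_univ _, hcon.le⟩
        have := Finset.le_max' _ _ hmem
        rw [← hi0] at this
        have hlt : i0 < i.succ := by
          rw [Fin.lt_def, ← hcs]
          simp
        exact absurd this (not_le.2 hlt)
      exact mem_iUnion.2 ⟨i, ⟨hcs ▸ hi0mem, hsucc⟩⟩
  · intro τ hτ
    obtain ⟨i, hi⟩ := mem_iUnion.1 hτ
    refine ⟨le_trans (ht (by simp [Fin.le_def])) hi.1, le_trans hi.2 (ht (by simp [Fin.le_def]))⟩
theorem hotspot_on_vertical_side
    (n : ℕ) (hn : 1 ≤ n) (s : ℝ) (hs : 0 < s)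
    (t : Fin (n + 1) → ℝ) (ht : StrictMono t)
    (p : Fin (n + 1) → ℝ × ℝ)
    (T : ℝ → ℝ × ℝ)
    (hT : ∀ i : Fin n, ∀ τ ∈ Icc (t i.castSucc) (t i.succ),
      T τ = p i.castSucc +
        ((τ - t i.castSucc) / (t i.succ - t i.castSucc)) • (p i.succ - p i.castSucc))
    (hhoriz : ∀ i : Fin n, (p i.castSucc).2 = (p i.succ).2)
    (hpos : ∀ i : Fin n, (p i.castSucc).1 ≠ (p i.succ).1) :
    ∃ x y : ℝ, ∃ j : Fin (n + 1),
      wgt s (t 0) (t (Fin.last n)) T x y =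
        (⨆ q : ℝ × ℝ, wgt s (t 0) (t (Fin.last n)) T q.1 q.2) ∧
      ((p j).1 = x ∨ (p j).1 = x + s) ∧
      y ≤ (p j).2 ∧ (p j).2 ≤ y + s := by
  classical
  set uu : Fin n → ℝ := fun i => t i.castSucc with huu
  set vv : Fin n → ℝ := fun i => t i.succ with hvv
  set aa : Fin n → ℝ := fun i => (p i.castSucc).1 with haa
  set bb : Fin n → ℝ := fun i => (p i.succ).1 with hbb
  set cc : Fin n → ℝ := fun i => (p i.castSucc).2 with hcc
  set AA : Fin n → ℝ := fun i => min (aa i) (bb i) with hAA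
  set BB : Fin n → ℝ := fun i => max (aa i) (bb i) with hBB
  set kk : Fin n → ℝ := fun i => (vv i - uu i) / (BB i - AA i) with hkk
  set el : ℝ → Fin n → ℝ := fun x i => max 0 (min (x + s) (BB i) - max x (AA i)) with hel
  set act : ℝ → Fin n → Prop := fun y i => y ≤ cc i ∧ cc i ≤ y + s with hact
  set w : ℝ → ℝ → Fin n → ℝ :=
    fun x y i => if act y i then kk i * el x i else 0 with hwdef
  set W : ℝ → ℝ → ℝ := fun x y => ∑ i : Fin n, w x y i with hW
  set F : ℝ × ℝ → ℝ≥0∞ := fun q => wgt s (t 0) (t (Fin.last n)) T q.1 q.2 with hFdef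
  have huv : ∀ i, uu i < vv i := fun i => ht (Fin.castSucc_lt_succ (i := i))
  have hABlt : ∀ i, AA i < BB i := fun i => min_lt_max.2 (hpos i)
  have hkkpos : ∀ i, 0 < kk i :=
    fun i => div_pos (sub_pos.2 (huv i)) (sub_pos.2 (hABlt i))
  have helnn : ∀ x i, 0 ≤ el x i := fun x i => le_max_left _ _
  have hwnn : ∀ x y i, 0 ≤ w x y i := by
    intro x y i
    rw [hwdef]
    dsimp only
    split
    · exact mul_nonneg (hkkpos i).le (helnn x i)
    · exact le_refl _
  have hWnn : ∀ x y, 0 ≤ W x y := fun x y => Finset.sum_nonneg fun i _ => hwnn x y i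
  -- Step A: the weight formula
  have hF : ∀ x y : ℝ, wgt s (t 0) (t (Fin.last n)) T x y = ENNReal.ofReal (W x y) := by
    intro x y
    set E : Fin n → Set ℝ := fun i => Icc (uu i) (vv i) ∩
      {τ | (aa i + ((τ - uu i) / (vv i - uu i)) * (bb i - aa i), cc i) ∈ Square s x y}
      with hE
    have hTmem : ∀ i, ∀ τ ∈ Icc (uu i) (vv i),
        (T τ ∈ Square s x y ↔
          (aa i + ((τ - uu i) / (vv i - uu i)) * (bb i - aa i), cc i) ∈ Square s x y) := by
      intro i τ hτ
      have hTτ : T τ = (aa i + ((τ - uu i) / (vv i - uu i)) * (bb i - aa i), cc i) := by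
        rw [hT i τ hτ]
        apply Prod.ext
        · simp [haa, hbb, huu, hvv, mul_comm]
        · simp [hcc, huu, hvv, ← hhoriz i]
      rw [hTτ]
    have hsetE : {τ ∈ Icc (t 0) (t (Fin.last n)) | T τ ∈ Square s x y} = ⋃ i, E i := by
      ext τ
      simp only [mem_setOf_eq, mem_iUnion, hE, mem_inter_iff]
      constructor
      · rintro ⟨hIcc, hSq⟩
        have := icc_cover n hn t ht.monotone ▸ hIcc
        obtain ⟨i, hi⟩ := mem_iUnion.1 this
        exact ⟨i, hi, (hTmem i τ hi).1 hSq⟩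
      · rintro ⟨i, hIcc, hSq⟩
        have hmem : τ ∈ Icc (t 0) (t (Fin.last n)) := by
          rw [icc_cover n hn t ht.monotone]
          exact mem_iUnion.2 ⟨i, hIcc⟩
        exact ⟨hmem, (hTmem i τ hIcc).2 hSq⟩
    have hEvol : ∀ i, volume (E i) = ENNReal.ofReal (w x y i) := by
      intro i
      by_cases hacti : y ≤ cc i ∧ cc i ≤ y + s
      · have hEeq : E i = Icc (uu i) (vv i) ∩
            {τ | aa i + ((τ - uu i) / (vv i - uu i)) * (bb i - aa i) ∈ Icc x (x + s)} := by
          ext τ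
          simp only [hE, mem_inter_iff, mem_setOf_eq, Square, mem_prod, mem_Icc]
          tauto
        rw [hEeq, vol_seg _ _ _ _ _ _ (huv i) (hpos i)]
        have hwval : w x y i = kk i * el x i := by
          simp only [hwdef, hact]
          rw [if_pos hacti]
        rw [hwval]
      · have hEeq : E i = ∅ := by
          ext τ
          simp only [hE, mem_inter_iff, mem_setOf_eq, Square, mem_prod, mem_Icc,
            mem_empty_iff_false, iff_false]
          tauto
        have hwval : w x y i = 0 := by
          simp only [hwdef, hact]
          rw [if_neg hacti]
        rw [hEeq, hwval]
        simp
    have hEmeas : ∀ i, MeasurableSet (E i) := by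
      intro i
      apply measurableSet_Icc.inter
      have hcont : Continuous fun τ : ℝ =>
          (aa i + ((τ - uu i) / (vv i - uu i)) * (bb i - aa i), cc i) := by fun_prop
      exact hcont.measurable (measurableSet_Icc.prod measurableSet_Icc)
    have hvolU : volume (⋃ i, E i) = ∑ i : Fin n, volume (E i) := by
      apply le_antisymm
      · calc volume (⋃ i, E i) ≤ ∑' i : Fin n, volume (E i) := measure_iUnion_le E
          _ = ∑ i : Fin n, volume (E i) := tsum_fintype _
      · have h1 : ∀ i, volume (E i) ≤ volume (E i ∩ Ioo (uu i) (vv i)) := by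
          intro i
          have hsub : E i ⊆ (E i ∩ Ioo (uu i) (vv i)) ∪ {uu i, vv i} := by
            intro τ hτ
            have hIcc : τ ∈ Icc (uu i) (vv i) := hτ.1
            rcases eq_or_lt_of_le hIcc.1 with h | h
            · exact Or.inr (Or.inl h.symm)
            rcases eq_or_lt_of_le hIcc.2 with h' | h'
            · exact Or.inr (Or.inr h')
            exact Or.inl ⟨hτ, h, h'⟩
          calc volume (E i) ≤ volume ((E i ∩ Ioo (uu i) (vv i)) ∪ {uu i, vv i}) :=
                measure_mono hsub
            _ ≤ volume (E i ∩ Ioo (uu i) (vv i)) + volume ({uu i, vv i} : Set ℝ) :=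
                measure_union_le _ _
            _ = volume (E i ∩ Ioo (uu i) (vv i)) := by
                rw [(Set.toFinite ({uu i, vv i} : Set ℝ)).measure_zero volume, add_zero]
        have hdisj : Pairwise (Function.onFun Disjoint
            (fun i => E i ∩ Ioo (uu i) (vv i))) := by
          have key : ∀ i j : Fin n, i < j →
              Disjoint (E i ∩ Ioo (uu i) (vv i)) (E j ∩ Ioo (uu j) (vv j)) := by
            intro i j hij
            have hle : vv i ≤ uu j := by
              apply ht.monotone
              rw [Fin.le_def]
              simp only [Fin.val_succ, Fin.coe_castSucc]
              exact hij
            rw [Set.disjoint_left]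
            rintro τ ⟨-, h1⟩ ⟨-, h2⟩
            exact absurd (h1.2.trans_le (hle.trans h2.1.le)) (lt_irrefl τ)
          intro i j hij
          rcases lt_or_gt_of_ne hij with h | h
          · exact key i j h
          · exact (key j i h).symm
        calc ∑ i : Fin n, volume (E i)
            ≤ ∑ i : Fin n, volume (E i ∩ Ioo (uu i) (vv i)) :=
              Finset.sum_le_sum fun i _ => h1 i
          _ = ∑' i : Fin n, volume (E i ∩ Ioo (uu i) (vv i)) := (tsum_fintype _).symm
          _ = volume (⋃ i, E i ∩ Ioo (uu i) (vv i)) :=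
              (measure_iUnion hdisj fun i => (hEmeas i).inter measurableSet_Ioo).symm
          _ ≤ volume (⋃ i, E i) :=
              measure_mono (iUnion_mono fun i => inter_subset_left)
    rw [wgt, hsetE, hvolU]
    rw [Finset.sum_congr rfl fun i _ => hEvol i]
    rw [← ENNReal.ofReal_sum_of_nonneg fun i _ => hwnn x y i]
  have helval : ∀ x i, el x i = max 0 (min (x + s) (BB i) - max x (AA i)) :=
    fun x i => by simp only [hel]
  have hwval : ∀ x y i, (y ≤ cc i ∧ cc i ≤ y + s) → w x y i = kk i * el x i := by
    intro x y i hacti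
    simp only [hwdef, hact]
    rw [if_pos hacti]
  have hwval0 : ∀ x y i, ¬(y ≤ cc i ∧ cc i ≤ y + s) → w x y i = 0 := by
    intro x y i hacti
    simp only [hwdef, hact]
    rw [if_neg hacti]
  have hFinNe : (Finset.univ : Finset (Fin n)).Nonempty := ⟨⟨0, hn⟩, Finset.mem_univ _⟩
  set R0 : ℝ := ((Finset.univ : Finset (Fin n)).image BB).max' (hFinNe.image _) with hR0def
  set L0 : ℝ := ((Finset.univ : Finset (Fin n)).image AA).min' (hFinNe.image _) - s with hL0def
  have hR0 : ∀ i, BB i ≤ R0 :=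
    fun i => Finset.le_max' _ _ (Finset.mem_image_of_mem _ (Finset.mem_univ i))
  have hL0 : ∀ i, L0 + s ≤ AA i := by
    intro i
    have := Finset.min'_le _ _ (Finset.mem_image_of_mem AA (Finset.mem_univ i))
    rw [hL0def]
    linarith
  have hz_right : ∀ x y, R0 ≤ x → W x y = 0 := by
    intro x y hx
    apply Finset.sum_eq_zero
    intro i _
    have hel0 : el x i = 0 := by
      rw [helval]
      apply max_eq_left
      have h1 : min (x + s) (BB i) ≤ BB i := min_le_right _ _
      have h2 : x ≤ max x (AA i) := le_max_left _ _
      have := hR0 i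
      linarith
    by_cases hacti : y ≤ cc i ∧ cc i ≤ y + s
    · rw [hwval x y i hacti, hel0, mul_zero]
    · exact hwval0 x y i hacti
  have hz_left : ∀ x y, x ≤ L0 → W x y = 0 := by
    intro x y hx
    apply Finset.sum_eq_zero
    intro i _
    have hel0 : el x i = 0 := by
      rw [helval]
      apply max_eq_left
      have h1 : min (x + s) (BB i) ≤ x + s := min_le_left _ _
      have h2 : AA i ≤ max x (AA i) := le_max_right _ _
      have := hL0 i
      linarith
    by_cases hacti : y ≤ cc i ∧ cc i ≤ y + s
    · rw [hwval x y i hacti, hel0, mul_zero]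
    · exact hwval0 x y i hacti
  set Kk : ℝ → Finset ℝ := fun y =>
    (Finset.univ.filter (fun i : Fin n => y ≤ cc i ∧ cc i ≤ y + s)).biUnion
      (fun i => {AA i, BB i, AA i - s, BB i - s}) with hKk
  have haff : ∀ y c d : ℝ, c < d → (∀ k ∈ Kk y, k ∉ Ioo c d) →
      ∃ α β : ℝ, ∀ x ∈ Icc c d, W x y = α * x + β := by
    intro y c d hcd hK
    have claim : ∀ i : Fin n, ∃ α β : ℝ, ∀ x ∈ Icc c d, w x y i = α * x + β := by
      intro i
      by_cases hacti : y ≤ cc i ∧ cc i ≤ y + s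
      · have hmem : ∀ z ∈ ({AA i, BB i, AA i - s, BB i - s} : Finset ℝ), z ∉ Ioo c d := by
          intro z hz
          refine hK z ?_
          rw [hKk]
          exact Finset.mem_biUnion.2
            ⟨i, Finset.mem_filter.2 ⟨Finset.mem_univ _, hacti⟩, hz⟩
        have hBB' : BB i ∉ Ioo c d := hmem _ (by simp)
        have hAAs : AA i - s ∉ Ioo c d := hmem _ (by simp)
        have hAA' : AA i ∉ Ioo c d := hmem _ (by simp)
        have hBBs : BB i - s ∉ Ioo c d := hmem _ (by simp)
        rw [mem_Ioo, not_and_or, not_lt, not_lt] at hBB' hAAs hAA' hBBs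
        have hABle : AA i ≤ BB i := (hABlt i).le
        rcases hAAs with hAs | hAs
        swap
        · -- d ≤ AA i - s : identically zero on [c,d]
          refine ⟨0, 0, fun x hx => ?_⟩
          rw [hwval x y i hacti, helval, max_eq_left ?_, mul_zero, zero_mul, zero_add]
          have h1 : min (x + s) (BB i) ≤ x + s := min_le_left _ _
          have h2 : AA i ≤ max x (AA i) := le_max_right _ _
          have := hx.2
          linarith
        rcases hBB' with hB | hB
        · -- BB i ≤ c : identically zero on [c,d]
          refine ⟨0, 0, fun x hx => ?_⟩
          rw [hwval x y i hacti, helval, max_eq_left ?_, mul_zero, zero_mul, zero_add]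
          have h1 : min (x + s) (BB i) ≤ BB i := min_le_right _ _
          have h2 : x ≤ max x (AA i) := le_max_left _ _
          have := hx.1
          linarith
        -- main zone: AA i - s ≤ c and d ≤ BB i
        have hpos' : ∀ x ∈ Icc c d, max x (AA i) ≤ min (x + s) (BB i) := by
          intro x hx
          apply max_le
          · exact le_min (by linarith) (by linarith [hx.2])
          · exact le_min (by linarith [hx.1]) hABle
        rcases hBBs with hBs | hBs <;> rcases hAA' with hA | hA
        · -- min = BB i, max = x
          refine ⟨-(kk i), kk i * BB i, fun x hx => ?_⟩
          rw [hwval x y i hacti, helval,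
            min_eq_right (by linarith [hx.1] : BB i ≤ x + s),
            max_eq_left (by linarith [hx.1] : AA i ≤ x),
            max_eq_right ?_]
          · ring
          · have := hpos' x hx
            rw [min_eq_right (by linarith [hx.1] : BB i ≤ x + s),
              max_eq_left (by linarith [hx.1] : AA i ≤ x)] at this
            linarith
        · -- min = BB i, max = AA i
          refine ⟨0, kk i * (BB i - AA i), fun x hx => ?_⟩
          rw [hwval x y i hacti, helval,
            min_eq_right (by linarith [hx.1] : BB i ≤ x + s),
            max_eq_right (by linarith [hx.2] : x ≤ AA i),
            max_eq_right (by linarith : (0:ℝ) ≤ BB i - AA i)]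
          ring
        · -- min = x + s, max = x
          refine ⟨0, kk i * s, fun x hx => ?_⟩
          rw [hwval x y i hacti, helval,
            min_eq_left (by linarith [hx.2] : x + s ≤ BB i),
            max_eq_left (by linarith [hx.1] : AA i ≤ x),
            max_eq_right (by linarith : (0:ℝ) ≤ x + s - x)]
          ring
        · -- min = x + s, max = AA i
          refine ⟨kk i, kk i * (s - AA i), fun x hx => ?_⟩
          rw [hwval x y i hacti, helval,
            min_eq_left (by linarith [hx.2] : x + s ≤ BB i),
            max_eq_right (by linarith [hx.2] : x ≤ AA i),
            max_eq_right (by linarith [hx.1, hs] : (0:ℝ) ≤ x + s - AA i)]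
          ring
      · exact ⟨0, 0, fun x hx => by rw [hwval0 x y i hacti]; ring⟩
    choose α β hαβ using claim
    refine ⟨∑ i : Fin n, α i, ∑ i : Fin n, β i, fun x hx => ?_⟩
    simp only [hW]
    rw [Finset.sum_congr rfl fun i _ => hαβ i x hx, Finset.sum_add_distrib, ← Finset.sum_mul]
  have hkey : ∀ y : ℝ,
      (Finset.univ.filter (fun i : Fin n => y ≤ cc i ∧ cc i ≤ y + s)).Nonempty →
      ∃ k ∈ Kk y, ∀ x, W x y ≤ W k y := by
    intro y hne
    obtain ⟨i0, hi0⟩ := hne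
    have hKne : (Kk y).Nonempty := by
      refine ⟨AA i0, ?_⟩
      rw [hKk]
      exact Finset.mem_biUnion.2 ⟨i0, hi0, by simp⟩
    exact pl_max (Kk y) hKne (fun x => W x y) L0 R0 (haff y)
      (fun x hx => hz_right x y hx) (fun x hx => hz_left x y hx)
  -- Step C: candidate set and final assembly
  set coord : Fin 4 → Fin n → ℝ := fun k i =>
    if k = 0 then AA i else if k = 1 then BB i else if k = 2 then AA i - s else BB i - s
    with hcoord
  set Fcand : Fin n × Fin n × Fin 4 → ℝ≥0∞ := fun m =>
    if cc m.2.1 ≤ cc m.1 ∧ cc m.1 ≤ cc m.2.1 + s then F (coord m.2.2 m.1, cc m.2.1) else 0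
    with hFcand
  have hNe : (Finset.univ : Finset (Fin n × Fin n × Fin 4)).Nonempty :=
    ⟨⟨⟨0, hn⟩, ⟨0, hn⟩, 0⟩, Finset.mem_univ _⟩
  obtain ⟨m, -, hm⟩ := Finset.exists_max_image Finset.univ Fcand hNe
  obtain ⟨mi, mj, mk⟩ := m
  have hF' : ∀ q : ℝ × ℝ, F q = ENNReal.ofReal (W q.1 q.2) := by
    intro q
    simp only [hFdef]
    exact hF q.1 q.2
  have hdom : ∀ q : ℝ × ℝ, F q ≤ Fcand (mi, mj, mk) := by
    rintro ⟨x, y⟩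
    by_cases hA : (Finset.univ.filter (fun i : Fin n => y ≤ cc i ∧ cc i ≤ y + s)).Nonempty
    · have hne2 : ((Finset.univ.filter
          (fun i : Fin n => y ≤ cc i ∧ cc i ≤ y + s)).image cc).Nonempty := hA.image _
      set y' := ((Finset.univ.filter
        (fun i : Fin n => y ≤ cc i ∧ cc i ≤ y + s)).image cc).min' hne2 with hy'
      obtain ⟨j, hjmem, hjcc⟩ := Finset.mem_image.1 (Finset.min'_mem _ hne2)
      have hjact : y ≤ cc j ∧ cc j ≤ y + s := (Finset.mem_filter.1 hjmem).2
      have hjcc' : cc j = y' := by rw [hy']; exact hjcc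
      have hyy' : y ≤ y' := hjcc' ▸ hjact.1
      have hsub : ∀ i : Fin n, (y ≤ cc i ∧ cc i ≤ y + s) → (y' ≤ cc i ∧ cc i ≤ y' + s) := by
        intro i hi
        constructor
        · exact Finset.min'_le _ _
            (Finset.mem_image_of_mem cc (Finset.mem_filter.2 ⟨Finset.mem_univ _, hi⟩))
        · linarith [hi.2]
      have hWmono : ∀ x', W x' y ≤ W x' y' := by
        intro x'
        apply Finset.sum_le_sum
        intro i _
        by_cases hacti : y ≤ cc i ∧ cc i ≤ y + s
        · rw [hwval x' y i hacti, hwval x' y' i (hsub i hacti)]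
        · rw [hwval0 x' y i hacti]
          exact hwnn x' y' i
      have hne3 : (Finset.univ.filter
          (fun i : Fin n => y' ≤ cc i ∧ cc i ≤ y' + s)).Nonempty := by
        refine ⟨j, Finset.mem_filter.2 ⟨Finset.mem_univ _, ?_, ?_⟩⟩
        · rw [hjcc']
        · rw [hjcc']; linarith
      obtain ⟨k, hkK, hk⟩ := hkey y' hne3
      rw [hKk] at hkK
      obtain ⟨i, hifil, hik⟩ := Finset.mem_biUnion.1 hkK
      have hiact : y' ≤ cc i ∧ cc i ≤ y' + s := (Finset.mem_filter.1 hifil).2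
      have hcoordk : ∃ k4 : Fin 4, coord k4 i = k := by
        simp only [Finset.mem_insert, Finset.mem_singleton] at hik
        rcases hik with h | h | h | h
        · exact ⟨0, by simp [hcoord, h]⟩
        · exact ⟨1, by simp [hcoord, h]⟩
        · exact ⟨2, by simp [hcoord, h]⟩
        · exact ⟨3, by simp [hcoord, h]⟩
      obtain ⟨k4, hk4⟩ := hcoordk
      have hcandval : Fcand (i, j, k4) = F (k, y') := by
        simp only [hFcand]
        rw [if_pos (show cc j ≤ cc i ∧ cc i ≤ cc j + s by rw [hjcc']; exact hiact)]
        rw [hk4, hjcc']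
      calc F (x, y) = ENNReal.ofReal (W x y) := hF' (x, y)
        _ ≤ ENNReal.ofReal (W x y') := ENNReal.ofReal_le_ofReal (hWmono x)
        _ ≤ ENNReal.ofReal (W k y') := ENNReal.ofReal_le_ofReal (hk x)
        _ = F (k, y') := (hF' (k, y')).symm
        _ = Fcand (i, j, k4) := hcandval.symm
        _ ≤ Fcand (mi, mj, mk) := hm _ (Finset.mem_univ _)
    · have hW0 : W x y = 0 := by
        apply Finset.sum_eq_zero
        intro i _
        apply hwval0
        intro hcon
        exact hA ⟨i, Finset.mem_filter.2 ⟨Finset.mem_univ _, hcon⟩⟩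
      rw [hF' (x, y)]
      simp only [hW0, ENNReal.ofReal_zero]
      exact zero_le
  have hvert : ∀ z : ℝ, (z = aa mi ∨ z = bb mi) →
      ∃ j : Fin (n + 1), (p j).1 = z ∧ (p j).2 = cc mi := by
    rintro z (h | h)
    · exact ⟨mi.castSucc, by rw [h], by simp [hcc]⟩
    · exact ⟨mi.succ, by rw [h], by simp [hcc, hhoriz mi]⟩
  by_cases hactm : cc mj ≤ cc mi ∧ cc mi ≤ cc mj + s
  · set xm := coord mk mi with hxm
    have hFm : Fcand (mi, mj, mk) = F (xm, cc mj) := by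
      simp only [hFcand]
      rw [if_pos hactm]
    have hsup : wgt s (t 0) (t (Fin.last n)) T xm (cc mj) =
        ⨆ q : ℝ × ℝ, wgt s (t 0) (t (Fin.last n)) T q.1 q.2 := by
      apply le_antisymm
      · exact le_iSup (fun q : ℝ × ℝ => wgt s (t 0) (t (Fin.last n)) T q.1 q.2)
          ((xm, cc mj) : ℝ × ℝ)
      · apply iSup_le
        intro q
        have h1 := hdom q
        rw [hFm] at h1
        simpa only [hFdef] using h1
    have hAAor : AA mi = aa mi ∨ AA mi = bb mi := min_choice _ _
    have hBBor : BB mi = aa mi ∨ BB mi = bb mi := max_choice _ _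
    have hjex : ∃ j : Fin (n + 1), ((p j).1 = xm ∨ (p j).1 = xm + s) ∧ (p j).2 = cc mi := by
      have h4 : mk = 0 ∨ mk = 1 ∨ mk = 2 ∨ mk = 3 := by omega
      rcases h4 with h | h | h | h
      · obtain ⟨j, hj1, hj2⟩ := hvert (AA mi) hAAor
        refine ⟨j, Or.inl ?_, hj2⟩
        rw [hxm, hcoord, h]
        simpa using hj1
      · obtain ⟨j, hj1, hj2⟩ := hvert (BB mi) hBBor
        refine ⟨j, Or.inl ?_, hj2⟩
        rw [hxm, hcoord, h]
        simpa using hj1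
      · obtain ⟨j, hj1, hj2⟩ := hvert (AA mi) hAAor
        refine ⟨j, Or.inr ?_, hj2⟩
        rw [hxm, hcoord, h, hj1]
        beta_reduce
        rw [if_neg (by decide), if_neg (by decide), if_pos (by decide)]
        ring
      · obtain ⟨j, hj1, hj2⟩ := hvert (BB mi) hBBor
        refine ⟨j, Or.inr ?_, hj2⟩
        rw [hxm, hcoord, h, hj1]
        beta_reduce
        rw [if_neg (by decide), if_neg (by decide), if_neg (by decide)]
        ring
    obtain ⟨j, hj1, hj2⟩ := hjex
    exact ⟨xm, cc mj, j, hsup, hj1, by rw [hj2]; exact hactm.1, by rw [hj2]; exact hactm.2⟩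
  · have hFm : Fcand (mi, mj, mk) = 0 := by
      simp only [hFcand]
      rw [if_neg hactm]
    have hzero : ∀ q : ℝ × ℝ, wgt s (t 0) (t (Fin.last n)) T q.1 q.2 = 0 := by
      intro q
      have h1 := hdom q
      rw [hFm] at h1
      have h2 : F q = 0 := le_antisymm h1 zero_le
      simpa only [hFdef] using h2
    set i0 : Fin n := ⟨0, hn⟩ with hi0
    refine ⟨aa i0, cc i0, i0.castSucc, ?_, Or.inl (by simp [haa]), ?_, ?_⟩
    · rw [hzero ((aa i0, cc i0) : ℝ × ℝ)]
      exact (le_antisymm (iSup_le fun q => le_of_eq (hzero q)) zero_le).symm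
    · simp [hcc]
    · simp only [hcc]
      linarith
end

section
/- Let H be a horizontal trajectory with n ≥ 1 edges, each of positive length (i.e., (p_{i−1}).1 ≠ (p_i).1 for all 1 ≤ i ≤ n), and fix a side length s > 0. Then the supremum of w_H(a, b) over all squares Square(a, b) having a corner coinciding with a vertex of H — that is, over all j ∈ {0, …, n} and all (a, b) ∈ {((p_j).1, (p_j).2), ((p_j).1 − s, (p_j).2), ((p_j).1, (p_j).2 − s), ((p_j).1 − s, (p_j).2 − s)} — is at least h(H)/2. -/
open MeasureTheory Set
open scoped ENNReal

lemma affine_mem_range (u v a b τ : ℝ) (huv : u < v) (hτ : τ ∈ Icc u v) :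
    a + ((τ - u)/(v - u)) * (b - a) ∈ Icc (min a b) (max a b) := by
  have hv : (0:ℝ) < v - u := by linarith
  have h0 : 0 ≤ (τ - u)/(v - u) := div_nonneg (by linarith [hτ.1]) hv.le
  have h1 : (τ - u)/(v - u) ≤ 1 := (div_le_one hv).mpr (by linarith [hτ.2])
  rcases le_total a b with h | h <;>
    [simp only [min_def, max_def, if_pos h, mem_Icc];
     simp only [min_comm a b, max_comm a b, min_def, max_def, if_pos h, mem_Icc]] <;>
    constructor <;> nlinarith

lemma affine_preimage_Icc (u v a b x s : ℝ) (huv : u < v) (hs : 0 < s)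
    (hx : min a b ≤ x) (hxs : x + s ≤ max a b) :
    ∃ α β, u ≤ α ∧ β ≤ v ∧ β - α = s * (v - u) / |b - a| ∧
      (fun τ => a + ((τ - u)/(v - u)) * (b - a)) ⁻¹' (Icc x (x + s)) = Icc α β := by
  have hv : (0:ℝ) < v - u := by linarith
  have hmm : min a b < max a b := lt_of_le_of_lt hx (lt_of_lt_of_le (by linarith) hxs)
  rcases (min_lt_max.mp hmm).lt_or_gt with h | h
  · -- a < b
    have hb : (0:ℝ) < b - a := by linarith
    have hax : a ≤ x := by simpa [min_def, h.le] using hx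
    have hxb : x + s ≤ b := by rw [max_def] at hxs; simpa [h.le, if_pos h.le] using hxs
    refine ⟨u + (x - a) * (v - u) / (b - a), u + (x + s - a) * (v - u) / (b - a), ?_, ?_, ?_, ?_⟩
    · have : 0 ≤ (x - a) * (v - u) / (b - a) :=
        div_nonneg (mul_nonneg (by linarith) hv.le) hb.le
      linarith
    · have : (x + s - a) * (v - u) / (b - a) ≤ v - u := by
        rw [div_le_iff₀ hb]; nlinarith
      linarith
    · rw [abs_of_pos hb]; field_simp; ring
    · ext τ
      simp only [mem_preimage, mem_Icc]
      rw [div_mul_eq_mul_div]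
      constructor
      · rintro ⟨h1, h2⟩
        have h1' : (x - a) * (v - u) ≤ (τ - u) * (b - a) :=
          (le_div_iff₀ hv).mp (by linarith)
        have h2' : (τ - u) * (b - a) ≤ (x + s - a) * (v - u) :=
          (div_le_iff₀ hv).mp (by linarith)
        constructor
        · have : (x - a) * (v - u) / (b - a) ≤ τ - u := (div_le_iff₀ hb).mpr (by linarith)
          linarith
        · have : τ - u ≤ (x + s - a) * (v - u) / (b - a) := (le_div_iff₀ hb).mpr (by linarith)
          linarith
      · rintro ⟨h1, h2⟩
        have h1' : (x - a) * (v - u) / (b - a) ≤ τ - u := by linarith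
        have h2' : τ - u ≤ (x + s - a) * (v - u) / (b - a) := by linarith
        have h1'' : (x - a) * (v - u) ≤ (τ - u) * (b - a) := (div_le_iff₀ hb).mp h1'
        have h2'' : (τ - u) * (b - a) ≤ (x + s - a) * (v - u) := (le_div_iff₀ hb).mp h2'
        constructor
        · have : x - a ≤ (τ - u) * (b - a) / (v - u) := (le_div_iff₀ hv).mpr (by linarith)
          linarith
        · have : (τ - u) * (b - a) / (v - u) ≤ x + s - a := (div_le_iff₀ hv).mpr (by linarith)
          linarith
  · -- b < a
    have hb : (0:ℝ) < a - b := by linarith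
    have hbx : b ≤ x := by simpa [min_def, h.le, not_le.mpr h] using hx
    have hxa : x + s ≤ a := by rw [max_def] at hxs; simpa [not_le.mpr h] using hxs
    refine ⟨u + (a - (x + s)) * (v - u) / (a - b), u + (a - x) * (v - u) / (a - b), ?_, ?_, ?_, ?_⟩
    · have : 0 ≤ (a - (x + s)) * (v - u) / (a - b) :=
        div_nonneg (mul_nonneg (by linarith) hv.le) hb.le
      linarith
    · have : (a - x) * (v - u) / (a - b) ≤ v - u := by
        rw [div_le_iff₀ hb]; nlinarith
      linarith
    · rw [abs_of_neg (by linarith : b - a < 0), neg_sub]; field_simp; ring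
    · ext τ
      simp only [mem_preimage, mem_Icc]
      rw [div_mul_eq_mul_div]
      constructor
      · rintro ⟨h1, h2⟩
        have h1' : (τ - u) * (b - a) ≤ (x + s - a) * (v - u) :=
          (div_le_iff₀ hv).mp (by linarith)
        have h2' : (x - a) * (v - u) ≤ (τ - u) * (b - a) :=
          (le_div_iff₀ hv).mp (by linarith)
        constructor
        · have : (a - (x + s)) * (v - u) / (a - b) ≤ τ - u := (div_le_iff₀ hb).mpr (by nlinarith)
          linarith
        · have : τ - u ≤ (a - x) * (v - u) / (a - b) := (le_div_iff₀ hb).mpr (by nlinarith)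
          linarith
      · rintro ⟨h1, h2⟩
        have h1'' : (a - (x + s)) * (v - u) ≤ (τ - u) * (a - b) := (div_le_iff₀ hb).mp (by linarith)
        have h2'' : (τ - u) * (a - b) ≤ (a - x) * (v - u) := (le_div_iff₀ hb).mp (by linarith)
        constructor
        · have : x - a ≤ (τ - u) * (b - a) / (v - u) := (le_div_iff₀ hv).mpr (by nlinarith)
          linarith
        · have : (τ - u) * (b - a) / (v - u) ≤ x + s - a := (div_le_iff₀ hv).mpr (by nlinarith)
          linarith

lemma vol_affine_preimage (u v a b x s : ℝ) (huv : u < v) (hs : 0 < s)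
    (hx : min a b ≤ x) (hxs : x + s ≤ max a b) :
    volume ((fun τ => a + ((τ - u)/(v - u)) * (b - a)) ⁻¹' (Icc x (x + s)))
      = ENNReal.ofReal (s * (v - u) / |b - a|) := by
  obtain ⟨α, β, hα, hβ, hd, hset⟩ := affine_preimage_Icc u v a b x s huv hs hx hxs
  rw [hset, Real.volume_Icc, hd]

lemma vol_affine_inter_Ico (u v a b x s : ℝ) (huv : u < v) (hs : 0 < s)
    (hx : min a b ≤ x) (hxs : x + s ≤ max a b) :
    volume ((fun τ => a + ((τ - u)/(v - u)) * (b - a)) ⁻¹' (Icc x (x + s)) ∩ Ico u v)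
      = ENNReal.ofReal (s * (v - u) / |b - a|) := by
  obtain ⟨α, β, hα, hβ, hd, hset⟩ := affine_preimage_Icc u v a b x s huv hs hx hxs
  rw [hset]
  refine le_antisymm ?_ ?_
  · calc volume (Icc α β ∩ Ico u v) ≤ volume (Icc α β) := measure_mono inter_subset_left
    _ = ENNReal.ofReal (s * (v - u) / |b - a|) := by rw [Real.volume_Icc, hd]
  · calc ENNReal.ofReal (s * (v - u) / |b - a|) = volume (Ico α β) := by
          rw [Real.volume_Ico, hd]
    _ ≤ volume (Icc α β ∩ Ico u v) := by
        refine measure_mono fun τ hτ => ⟨⟨hτ.1, hτ.2.le⟩, ⟨le_trans hα hτ.1, lt_of_lt_of_le hτ.2 hβ⟩⟩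

lemma exists_edge (n : ℕ) (hn : 1 ≤ n) (t : Fin (n + 1) → ℝ) (ht : StrictMono t) (τ : ℝ)
    (hτ : τ ∈ Icc (t 0) (t (Fin.last n))) :
    ∃ i : Fin n, τ ∈ Icc (t i.castSucc) (t i.succ) := by
  classical
  set F := Finset.univ.filter (fun j : Fin (n + 1) => t j ≤ τ) with hF
  have h0 : (0 : Fin (n + 1)) ∈ F := by simp [hF, hτ.1]
  have hne : F.Nonempty := ⟨0, h0⟩
  set j := F.max' hne with hj
  have hjτ : t j ≤ τ := by
    have hmem := F.max'_mem hne
    rw [← hj] at hmem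
    rw [hF, Finset.mem_filter] at hmem
    exact hmem.2
  by_cases hjl : (j : ℕ) < n
  · refine ⟨⟨(j : ℕ), hjl⟩, ?_, ?_⟩
    · have he : (⟨(j : ℕ), hjl⟩ : Fin n).castSucc = j := by ext; simp
      rw [he]; exact hjτ
    · by_contra hcon
      push_neg at hcon
      have hmem : ((⟨(j : ℕ), hjl⟩ : Fin n).succ : Fin (n + 1)) ∈ F := by
        simp [hF]; exact hcon.le
      have hle := F.le_max' _ hmem
      rw [← hj] at hle
      rw [Fin.le_def] at hle
      simp at hle
  · have hjn : (j : ℕ) = n := by omega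
    have hjlast : j = Fin.last n := by ext; simp [hjn]
    have hτn : τ = t (Fin.last n) := le_antisymm hτ.2 (by rw [← hjlast]; exact hjτ)
    refine ⟨⟨n - 1, by omega⟩, ?_, ?_⟩
    · refine le_trans ?_ hτn.ge
      exact ht.monotone (Fin.le_last _)
    · have : (⟨n - 1, by omega⟩ : Fin n).succ = Fin.last n := by ext; simp; omega
      rw [this]; exact hτn.le

theorem corner_squares_half_hotspot
    (n : ℕ) (hn : 1 ≤ n) (s : ℝ) (hs : 0 < s)
    (t : Fin (n + 1) → ℝ) (ht : StrictMono t)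
    (p : Fin (n + 1) → ℝ × ℝ)
    (T : ℝ → ℝ × ℝ)
    (hT : ∀ i : Fin n, ∀ τ ∈ Icc (t i.castSucc) (t i.succ),
      T τ = p i.castSucc +
        ((τ - t i.castSucc) / (t i.succ - t i.castSucc)) • (p i.succ - p i.castSucc))
    (hhoriz : ∀ i : Fin n, (p i.castSucc).2 = (p i.succ).2)
    (hpos : ∀ i : Fin n, (p i.castSucc).1 ≠ (p i.succ).1) :
    (⨆ j : Fin (n + 1),
      ⨆ q ∈ ({((p j).1, (p j).2), ((p j).1 - s, (p j).2),
              ((p j).1, (p j).2 - s), ((p j).1 - s, (p j).2 - s)} : Set (ℝ × ℝ)),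
        wgt s (t 0) (t (Fin.last n)) T q.1 q.2) ≥
      (⨆ q : ℝ × ℝ, wgt s (t 0) (t (Fin.last n)) T q.1 q.2) / 2 := by
  classical
  set S := (⨆ j : Fin (n + 1),
      ⨆ q ∈ ({((p j).1, (p j).2), ((p j).1 - s, (p j).2),
              ((p j).1, (p j).2 - s), ((p j).1 - s, (p j).2 - s)} : Set (ℝ × ℝ)),
        wgt s (t 0) (t (Fin.last n)) T q.1 q.2) with hSdef
  -- all vertices share the same second coordinate
  have hc_all : ∀ j : Fin (n + 1), (p j).2 = (p 0).2 := by
    intro j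
    induction j using Fin.induction with
    | zero => rfl
    | succ i ih => rw [← hhoriz i]; exact ih
  -- times are ordered
  have huv : ∀ i : Fin n, t i.castSucc < t i.succ := fun i => ht (Fin.castSucc_lt_succ (i := i))
  have hedge_sub : ∀ i : Fin n, Icc (t i.castSucc) (t i.succ) ⊆ Icc (t 0) (t (Fin.last n)) :=
    fun i => Icc_subset_Icc (ht.monotone (Fin.zero_le _)) (ht.monotone (Fin.le_last _))
  -- the first coordinate of T on an edge
  have hTg : ∀ i : Fin n, ∀ τ ∈ Icc (t i.castSucc) (t i.succ),
      (T τ).1 = (p i.castSucc).1 +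
        ((τ - t i.castSucc) / (t i.succ - t i.castSucc)) * ((p i.succ).1 - (p i.castSucc).1) := by
    intro i τ hτ
    rw [hT i τ hτ]
    simp [Prod.fst_add, Prod.smul_fst, Prod.fst_sub, smul_eq_mul]
  -- the second coordinate of T is constant on the domain
  have hT2 : ∀ τ ∈ Icc (t 0) (t (Fin.last n)), (T τ).2 = (p 0).2 := by
    intro τ hτ
    obtain ⟨i, hi⟩ := exists_edge n hn t ht τ hτ
    rw [hT i τ hi]
    simp only [Prod.snd_add, Prod.smul_snd, Prod.snd_sub, smul_eq_mul]
    rw [hc_all i.castSucc, hc_all i.succ]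
    ring
  -- corner squares bound
  have hcor : ∀ (j : Fin (n + 1)) (xq : ℝ), (xq = (p j).1 ∨ xq = (p j).1 - s) →
      wgt s (t 0) (t (Fin.last n)) T xq (p 0).2 ≤ S := by
    intro j xq hxq
    rw [hSdef]
    refine le_iSup_of_le j ?_
    refine le_iSup₂_of_le (xq, (p 0).2) ?_ le_rfl
    simp only [mem_insert_iff, mem_singleton_iff]
    rcases hxq with h | h
    · exact Or.inl (by rw [h, hc_all j])
    · exact Or.inr (Or.inl (by rw [h, hc_all j]))
  -- the main bound
  have key : ∀ x y : ℝ, wgt s (t 0) (t (Fin.last n)) T x y ≤ S * 2 := by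
    intro x y
    have hS2 : S ≤ S * 2 := le_mul_of_one_le_right zero_le (by norm_num)
    by_cases hcy : (p 0).2 ∈ Icc y (y + s)
    swap
    · have hempty : {τ ∈ Icc (t 0) (t (Fin.last n)) | T τ ∈ Square s x y} = ∅ := by
        ext τ
        simp only [mem_setOf_eq, mem_empty_iff_false, iff_false, not_and]
        intro hτ hsq
        exact hcy (by rw [← hT2 τ hτ]; exact hsq.2)
      rw [wgt, hempty]
      simp
    by_cases hvx : ∃ j : Fin (n + 1), (p j).1 ∈ Icc x (x + s)
    · -- Case 1: a vertex value lies in [x, x+s]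
      obtain ⟨j, hj⟩ := hvx
      have hsub : {τ ∈ Icc (t 0) (t (Fin.last n)) | T τ ∈ Square s x y} ⊆
          {τ ∈ Icc (t 0) (t (Fin.last n)) | T τ ∈ Square s ((p j).1 - s) (p 0).2} ∪
          {τ ∈ Icc (t 0) (t (Fin.last n)) | T τ ∈ Square s ((p j).1) (p 0).2} := by
        rintro τ ⟨hτ, hsq⟩
        rw [Square, Set.mem_prod] at hsq
        have h2 : (T τ).2 ∈ Icc (p 0).2 ((p 0).2 + s) := by
          rw [hT2 τ hτ]; exact ⟨le_refl _, by linarith⟩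
        rcases le_total (T τ).1 ((p j).1) with h | h
        · exact Or.inl ⟨hτ, Set.mem_prod.mpr ⟨⟨by linarith [hsq.1.1, hj.2], by linarith⟩, h2⟩⟩
        · exact Or.inr ⟨hτ, Set.mem_prod.mpr ⟨⟨h, by linarith [hsq.1.2, hj.1]⟩, h2⟩⟩
      calc wgt s (t 0) (t (Fin.last n)) T x y
          ≤ wgt s (t 0) (t (Fin.last n)) T ((p j).1 - s) (p 0).2 +
            wgt s (t 0) (t (Fin.last n)) T ((p j).1) (p 0).2 :=
            le_trans (measure_mono hsub) (measure_union_le _ _)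
        _ ≤ S + S := add_le_add (hcor j _ (Or.inr rfl)) (hcor j _ (Or.inl rfl))
        _ = S * 2 := (mul_two S).symm
    · -- Case 2: no vertex value in [x, x+s]
      push_neg at hvx
      have hvx' : ∀ j : Fin (n + 1), (p j).1 < x ∨ x + s < (p j).1 := by
        intro j
        have := hvx j
        rw [mem_Icc, not_and_or, not_le, not_le] at this
        tauto
      by_cases hwx : ∃ j : Fin (n + 1), x + s < (p j).1
      swap
      · -- all vertex values below x : empty
        push_neg at hwx
        have hall : ∀ j, (p j).1 < x := by
          intro j
          rcases hvx' j with h | h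
          · exact h
          · exact absurd h (not_lt.mpr (hwx j))
        have hempty : {τ ∈ Icc (t 0) (t (Fin.last n)) | T τ ∈ Square s x y} = ∅ := by
          ext τ
          simp only [mem_setOf_eq, mem_empty_iff_false, iff_false, not_and]
          intro hτ hsq
          obtain ⟨i, hi⟩ := exists_edge n hn t ht τ hτ
          have hr := affine_mem_range (t i.castSucc) (t i.succ) (p i.castSucc).1 (p i.succ).1 τ
            (huv i) hi
          rw [← hTg i τ hi] at hr
          rw [Square, Set.mem_prod] at hsq
          have h1 := hsq.1.1
          have h2 := hr.2
          have : max ((p i.castSucc).1) ((p i.succ).1) < x :=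
            max_lt (hall i.castSucc) (hall i.succ)
          linarith
        rw [wgt, hempty]
        simp
      · -- take the smallest vertex value above x+s
        obtain ⟨j₀, hj₀, hmin⟩ : ∃ j₀ : Fin (n + 1), x + s < (p j₀).1 ∧
            ∀ j, x + s < (p j).1 → (p j₀).1 ≤ (p j).1 := by
          obtain ⟨j₁, hj₁⟩ := hwx
          obtain ⟨j₀, hj₀mem, hj₀min⟩ := Finset.exists_min_image
            (Finset.univ.filter fun j : Fin (n + 1) => x + s < (p j).1)
            (fun j => (p j).1) ⟨j₁, by simp [hj₁]⟩
          exact ⟨j₀, by simpa using hj₀mem, fun j hj => hj₀min j (by simp [hj])⟩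
        set w := (p j₀).1 with hw
        -- per-edge sets
        set C : Fin n → Set ℝ := fun i =>
          {τ ∈ Icc (t i.castSucc) (t i.succ) | T τ ∈ Square s x y} with hC
        set E : Fin n → Set ℝ := fun i =>
          (fun τ => (p i.castSucc).1 + ((τ - t i.castSucc) / (t i.succ - t i.castSucc)) *
            ((p i.succ).1 - (p i.castSucc).1)) ⁻¹' (Icc (w - s) (w - s + s)) ∩
            Ico (t i.castSucc) (t i.succ) with hE
        have hcover : {τ ∈ Icc (t 0) (t (Fin.last n)) | T τ ∈ Square s x y} ⊆ ⋃ i, C i := by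
          rintro τ ⟨hτ, hsq⟩
          obtain ⟨i, hi⟩ := exists_edge n hn t ht τ hτ
          exact mem_iUnion.mpr ⟨i, hi, hsq⟩
        have hCE : ∀ i, volume (C i) ≤ volume (E i) := by
          intro i
          have hCsub : C i ⊆ (fun τ => (p i.castSucc).1 +
              ((τ - t i.castSucc) / (t i.succ - t i.castSucc)) *
              ((p i.succ).1 - (p i.castSucc).1)) ⁻¹' (Icc x (x + s)) := by
            rintro τ ⟨hτ, hsq⟩
            rw [Square, Set.mem_prod] at hsq
            rw [mem_preimage, ← hTg i τ hτ]
            exact hsq.1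
          rcases hvx' i.castSucc with ha | ha <;> rcases hvx' i.succ with hb | hb
          · -- both below x : C i empty
            have : C i = ∅ := by
              ext τ
              simp only [mem_empty_iff_false, iff_false]
              intro hτ
              have hx' := hCsub hτ
              rw [mem_preimage, mem_Icc] at hx'
              have hr := affine_mem_range (t i.castSucc) (t i.succ) (p i.castSucc).1 (p i.succ).1 τ
                (huv i) hτ.1
              have : max ((p i.castSucc).1) ((p i.succ).1) < x := max_lt ha hb
              linarith [hr.2, hx'.1]
            rw [this]; simp
          · -- a < x < x+s < b : containing
            have hm : min ((p i.castSucc).1) ((p i.succ).1) ≤ x := le_trans (min_le_left _ _) ha.le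
            have hM : x + s ≤ max ((p i.castSucc).1) ((p i.succ).1) :=
              le_trans hb.le (le_max_right _ _)
            have hmw : min ((p i.castSucc).1) ((p i.succ).1) ≤ w - s := by
              have : x < w - s := by linarith
              linarith [min_le_left ((p i.castSucc).1) ((p i.succ).1), ha]
            have hMw : (w - s) + s ≤ max ((p i.castSucc).1) ((p i.succ).1) := by
              have := hmin i.succ hb
              have := le_max_right ((p i.castSucc).1) ((p i.succ).1)
              linarith
            calc volume (C i)
                ≤ volume ((fun τ => (p i.castSucc).1 +
                    ((τ - t i.castSucc) / (t i.succ - t i.castSucc)) *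
                    ((p i.succ).1 - (p i.castSucc).1)) ⁻¹' (Icc x (x + s))) := measure_mono hCsub
              _ = ENNReal.ofReal (s * (t i.succ - t i.castSucc) /
                    |(p i.succ).1 - (p i.castSucc).1|) :=
                  vol_affine_preimage _ _ _ _ _ _ (huv i) hs hm hM
              _ = volume (E i) := by
                  rw [hE]
                  exact (vol_affine_inter_Ico _ _ _ _ _ _ (huv i) hs hmw hMw).symm
          · -- b < x < x+s < a : containing
            have hm : min ((p i.castSucc).1) ((p i.succ).1) ≤ x := le_trans (min_le_right _ _) hb.le
            have hM : x + s ≤ max ((p i.castSucc).1) ((p i.succ).1) :=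
              le_trans ha.le (le_max_left _ _)
            have hmw : min ((p i.castSucc).1) ((p i.succ).1) ≤ w - s := by
              have : x < w - s := by linarith
              linarith [min_le_right ((p i.castSucc).1) ((p i.succ).1), hb]
            have hMw : (w - s) + s ≤ max ((p i.castSucc).1) ((p i.succ).1) := by
              have := hmin i.castSucc ha
              have := le_max_left ((p i.castSucc).1) ((p i.succ).1)
              linarith
            calc volume (C i)
                ≤ volume ((fun τ => (p i.castSucc).1 +
                    ((τ - t i.castSucc) / (t i.succ - t i.castSucc)) *
                    ((p i.succ).1 - (p i.castSucc).1)) ⁻¹' (Icc x (x + s))) := measure_mono hCsub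
              _ = ENNReal.ofReal (s * (t i.succ - t i.castSucc) /
                    |(p i.succ).1 - (p i.castSucc).1|) :=
                  vol_affine_preimage _ _ _ _ _ _ (huv i) hs hm hM
              _ = volume (E i) := by
                  rw [hE]
                  exact (vol_affine_inter_Ico _ _ _ _ _ _ (huv i) hs hmw hMw).symm
          · -- both above x+s : C i empty
            have : C i = ∅ := by
              ext τ
              simp only [mem_empty_iff_false, iff_false]
              intro hτ
              have hx' := hCsub hτ
              rw [mem_preimage, mem_Icc] at hx'
              have hr := affine_mem_range (t i.castSucc) (t i.succ) (p i.castSucc).1 (p i.succ).1 τ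
                (huv i) hτ.1
              have : x + s < min ((p i.castSucc).1) ((p i.succ).1) := lt_min ha hb
              linarith [hr.1, hx'.2]
            rw [this]; simp
        have hEmeas : ∀ i, MeasurableSet (E i) := by
          intro i
          rw [hE]
          refine MeasurableSet.inter ?_ measurableSet_Ico
          refine measurableSet_Icc.preimage ?_
          fun_prop
        have hEdisj : Pairwise (Function.onFun Disjoint E) := by
          intro i j hij
          have hd : Disjoint (Ico (t i.castSucc) (t i.succ)) (Ico (t j.castSucc) (t j.succ)) := by
            rcases hij.lt_or_gt with h | h
            · rw [Set.disjoint_left]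
              rintro τ ⟨_, h2⟩ ⟨h3, _⟩
              have : t i.succ ≤ t j.castSucc := ht.monotone (by
                rw [Fin.le_def]
                simp only [Fin.val_succ, Fin.coe_castSucc]
                exact h)
              linarith
            · rw [Set.disjoint_right]
              rintro τ ⟨_, h2⟩ ⟨h3, _⟩
              have : t j.succ ≤ t i.castSucc := ht.monotone (by
                rw [Fin.le_def]
                simp only [Fin.val_succ, Fin.coe_castSucc]
                exact h)
              linarith
          exact hd.mono inter_subset_right inter_subset_right
        have hEsub : (⋃ i, E i) ⊆
            {τ ∈ Icc (t 0) (t (Fin.last n)) | T τ ∈ Square s (w - s) (p 0).2} := by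
          rintro τ hτ
          obtain ⟨i, hτi⟩ := mem_iUnion.mp hτ
          rw [hE] at hτi
          obtain ⟨hpre, hico⟩ := hτi
          have hτedge : τ ∈ Icc (t i.castSucc) (t i.succ) := ⟨hico.1, hico.2.le⟩
          have hτdom : τ ∈ Icc (t 0) (t (Fin.last n)) := hedge_sub i hτedge
          refine ⟨hτdom, ?_⟩
          rw [Square, Set.mem_prod]
          constructor
          · rw [hTg i τ hτedge]
            exact hpre
          · rw [hT2 τ hτdom]
            exact ⟨le_refl _, by linarith⟩
        calc wgt s (t 0) (t (Fin.last n)) T x y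
            ≤ volume (⋃ i, C i) := measure_mono hcover
          _ ≤ ∑' i, volume (C i) := measure_iUnion_le _
          _ ≤ ∑' i, volume (E i) := ENNReal.tsum_le_tsum hCE
          _ = volume (⋃ i, E i) := (measure_iUnion hEdisj hEmeas).symm
          _ ≤ wgt s (t 0) (t (Fin.last n)) T (w - s) (p 0).2 := measure_mono hEsub
          _ ≤ S := hcor j₀ _ (Or.inr rfl)
          _ ≤ S * 2 := hS2
  rw [ge_iff_le]
  exact ENNReal.div_le_of_le_mul (iSup_le fun q => key q.1 q.2)
end

section
/- Let T be an orthogonal trajectory with n ≥ 1 edges such that every edge is nondegenerate (p_{i−1} ≠ p_i for all 1 ≤ i ≤ n), and fix a side length s > 0. Then the supremum of w_T(a, b) over all squares Square(a, b) having a corner coinciding with a vertex of T — that is, over all j ∈ {0, …, n} and all (a, b) ∈ {((p_j).1, (p_j).2), ((p_j).1 − s, (p_j).2), ((p_j).1, (p_j).2 − s), ((p_j).1 − s, (p_j).2 − s)} — is at least h(T)/4. -/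
open MeasureTheory Set
open scoped ENNReal

lemma mem_between {c d r : ℝ} (h0 : 0 ≤ r) (h1 : r ≤ 1) :
    c + r * d ∈ Icc (min c (c + d)) (max c (c + d)) := by
  rcases le_or_gt 0 d with h | h
  · exact ⟨(min_le_left _ _).trans (by nlinarith), le_trans (by nlinarith) (le_max_right _ _)⟩
  · exact ⟨(min_le_right _ _).trans (by nlinarith), le_trans (by nlinarith) (le_max_left _ _)⟩

lemma vol_mono_1d {l u c d A B A' B' : ℝ} (hlu : l < u) (hd : d ≠ 0)
    (hlen : B - A ≤ B' - A') (h1 : min c (c + d) ≤ A') (h2 : B' ≤ max c (c + d)) :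
    volume {τ ∈ Ico l u | c + (τ - l) / (u - l) * d ∈ Icc A B}
      ≤ volume {τ ∈ Ico l u | c + (τ - l) / (u - l) * d ∈ Icc A' B'} := by
  have hΔ : (0:ℝ) < u - l := sub_pos.2 hlu
  set k := d / (u - l) with hk
  have hkne : k ≠ 0 := div_ne_zero hd (ne_of_gt hΔ)
  have hfk : ∀ τ : ℝ, c + (τ - l) / (u - l) * d = c + (τ - l) * k := fun τ => by
    rw [hk]; ring
  have hulk : (u - l) * k = d := by rw [hk]; field_simp
  rcases lt_or_gt_of_ne hd with hneg | hpos
  · -- d < 0, k < 0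
    have hk0 : k < 0 := div_neg_of_neg_of_pos hneg hΔ
    have hmin : min c (c + d) = c + d := min_eq_right (by linarith)
    have hmax : max c (c + d) = c := max_eq_left (by linarith)
    rw [hmin] at h1; rw [hmax] at h2
    calc volume {τ ∈ Ico l u | c + (τ - l) / (u - l) * d ∈ Icc A B}
        ≤ volume (Icc (l + (B - c)/k) (l + (A - c)/k)) := by
          apply measure_mono
          rintro τ ⟨_, hAB⟩
          rw [hfk] at hAB
          constructor
          · have h := (div_le_iff_of_neg hk0).2 (by linarith [hAB.2] : (τ - l) * k ≤ B - c)
            linarith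
          · have h := (le_div_iff_of_neg hk0).2 (by linarith [hAB.1] : A - c ≤ (τ - l) * k)
            linarith
      _ ≤ ENNReal.ofReal ((A' - B')/k) := by
          rw [Real.volume_Icc]
          apply ENNReal.ofReal_le_ofReal
          have e1 : l + (A - c)/k - (l + (B - c)/k) = (A - B)/k := by ring
          rw [e1]
          exact (div_le_div_right_of_neg hk0).2 (by linarith)
      _ = volume (Ico (l + (B' - c)/k) (l + (A' - c)/k)) := by
          rw [Real.volume_Ico]
          congr 1
          ring
      _ ≤ volume {τ ∈ Ico l u | c + (τ - l) / (u - l) * d ∈ Icc A' B'} := by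
          apply measure_mono
          rintro τ ⟨hτ1, hτ2⟩
          have hb : (B' - c)/k ≤ τ - l := by linarith
          have ha : τ - l < (A' - c)/k := by linarith
          have hB : (τ - l) * k ≤ B' - c := (div_le_iff_of_neg hk0).1 hb
          have hA : A' - c < (τ - l) * k := (lt_div_iff_of_neg hk0).1 ha
          refine ⟨⟨?_, ?_⟩, ?_⟩
          · have h0 : 0 ≤ (B' - c)/k := by
              rw [le_div_iff_of_neg hk0]; linarith
            linarith
          · have h0 : (A' - c)/k ≤ u - l := by
              rw [div_le_iff_of_neg hk0]
              calc (u - l) * k = d := hulk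
                _ ≤ A' - c := by linarith
            linarith
          · rw [hfk]; exact ⟨le_of_lt (by linarith), by linarith⟩
  · -- d > 0, k > 0
    have hk0 : 0 < k := div_pos hpos hΔ
    have hmin : min c (c + d) = c := min_eq_left (by linarith)
    have hmax : max c (c + d) = c + d := max_eq_right (by linarith)
    rw [hmin] at h1; rw [hmax] at h2
    calc volume {τ ∈ Ico l u | c + (τ - l) / (u - l) * d ∈ Icc A B}
        ≤ volume (Icc (l + (A - c)/k) (l + (B - c)/k)) := by
          apply measure_mono
          rintro τ ⟨_, hAB⟩
          rw [hfk] at hAB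
          constructor
          · have h := (div_le_iff₀ hk0).2 (by linarith [hAB.1] : A - c ≤ (τ - l) * k)
            linarith
          · have h := (le_div_iff₀ hk0).2 (by linarith [hAB.2] : (τ - l) * k ≤ B - c)
            linarith
      _ ≤ ENNReal.ofReal ((B' - A')/k) := by
          rw [Real.volume_Icc]
          apply ENNReal.ofReal_le_ofReal
          have e1 : l + (B - c)/k - (l + (A - c)/k) = (B - A)/k := by ring
          rw [e1]
          gcongr
      _ = volume (Ico (l + (A' - c)/k) (l + (B' - c)/k)) := by
          rw [Real.volume_Ico]
          congr 1
          ring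
      _ ≤ volume {τ ∈ Ico l u | c + (τ - l) / (u - l) * d ∈ Icc A' B'} := by
          apply measure_mono
          rintro τ ⟨hτ1, hτ2⟩
          have ha : (A' - c)/k ≤ τ - l := by linarith
          have hb : τ - l < (B' - c)/k := by linarith
          have hA : A' - c ≤ (τ - l) * k := (div_le_iff₀ hk0).1 ha
          have hB : (τ - l) * k < B' - c := (lt_div_iff₀ hk0).1 hb
          refine ⟨⟨?_, ?_⟩, ?_⟩
          · have h0 : 0 ≤ (A' - c)/k := div_nonneg (by linarith) (le_of_lt hk0)
            linarith
          · have h0 : (B' - c)/k ≤ u - l := by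
              rw [div_le_iff₀ hk0]
              calc B' - c ≤ d := by linarith
                _ = (u - l) * k := hulk.symm
            linarith
          · rw [hfk]; exact ⟨by linarith, le_of_lt (by linarith)⟩

lemma mem_Square {s x y : ℝ} {z : ℝ × ℝ} :
    z ∈ Square s x y ↔ z.1 ∈ Icc x (x + s) ∧ z.2 ∈ Icc y (y + s) := Iff.rfl

lemma Icc_cover {n : ℕ} (hn : 1 ≤ n) (t : Fin (n+1) → ℝ) (ht : StrictMono t) :
    Icc (t 0) (t (Fin.last n)) ⊆
      (⋃ i : Fin n, Ico (t i.castSucc) (t i.succ)) ∪ {t (Fin.last n)} := by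
  intro τ hτ
  rcases eq_or_lt_of_le hτ.2 with heq | hlt
  · exact Or.inr (by simp [heq])
  · left
    classical
    set F := Finset.univ.filter (fun i : Fin n => t i.castSucc ≤ τ) with hF
    have h0c : (Fin.castSucc (⟨0, hn⟩ : Fin n)) = (0 : Fin (n+1)) := by
      ext; simp
    have hFne : F.Nonempty := ⟨⟨0, hn⟩, by simp [hF, h0c, hτ.1]⟩
    set i := F.max' hFne with hi
    have hiF : i ∈ F := F.max'_mem hFne
    have hle : t i.castSucc ≤ τ := by
      have := Finset.mem_filter.1 hiF
      exact this.2
    refine mem_iUnion.2 ⟨i, hle, ?_⟩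
    by_contra hge
    push_neg at hge
    rcases lt_or_eq_of_le (Nat.succ_le_of_lt i.isLt) with hlt' | heq'
    · have hcs : (Fin.castSucc (⟨i.val + 1, hlt'⟩ : Fin n)) = i.succ := by
        ext; simp
      have hmem : (⟨i.val + 1, hlt'⟩ : Fin n) ∈ F := by
        simp only [hF, Finset.mem_filter, Finset.mem_univ, true_and]
        rw [hcs]; exact hge
      have := F.le_max' _ hmem
      rw [← hi] at this
      have : i.val + 1 ≤ i.val := this
      omega
    · have hsl : i.succ = Fin.last n := by
        ext; simpa using heq'
      rw [hsl] at hge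
      exact absurd hlt (not_lt.2 hge)

section branch

variable (n : ℕ) (s : ℝ) (t : Fin (n+1) → ℝ) (p : Fin (n+1) → ℝ × ℝ) (T : ℝ → ℝ × ℝ)

/-- the per-edge time set -/
def Wset (x y : ℝ) (i : Fin n) : Set ℝ :=
  {τ ∈ Ico (t i.castSucc) (t i.succ) | T τ ∈ Square s x y}

variable {n s t p T}

variable (hT : ∀ i : Fin n, ∀ τ ∈ Icc (t i.castSucc) (t i.succ),
      T τ = p i.castSucc +
        ((τ - t i.castSucc) / (t i.succ - t i.castSucc)) • (p i.succ - p i.castSucc))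
  (ht : StrictMono t)

include hT in
lemma Wset_eq (x y : ℝ) (i : Fin n) :
    Wset n s t T x y i = {τ ∈ Ico (t i.castSucc) (t i.succ) |
      p i.castSucc + ((τ - t i.castSucc) / (t i.succ - t i.castSucc)) • (p i.succ - p i.castSucc)
        ∈ Square s x y} := by
  ext τ
  constructor
  · rintro ⟨h1, h2⟩
    exact ⟨h1, by rw [← hT i τ (Ico_subset_Icc_self h1)]; exact h2⟩
  · rintro ⟨h1, h2⟩
    exact ⟨h1, by rw [hT i τ (Ico_subset_Icc_self h1)]; exact h2⟩

include hT in
lemma Wset_meas (x y : ℝ) (i : Fin n) : MeasurableSet (Wset n s t T x y i) := by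
  rw [Wset_eq hT]
  have hg : Continuous (fun τ : ℝ => p i.castSucc +
      ((τ - t i.castSucc) / (t i.succ - t i.castSucc)) • (p i.succ - p i.castSucc)) := by
    fun_prop
  exact measurableSet_Ico.inter (hg.measurable ((measurableSet_Icc.prod measurableSet_Icc)))

include hT in
lemma Wset_hor_mem {i : Fin n} (hhi : (p i.castSucc).2 = (p i.succ).2) (x y : ℝ) {τ : ℝ}
    (hτ : τ ∈ Ico (t i.castSucc) (t i.succ)) :
    T τ ∈ Square s x y ↔ ((p i.castSucc).2 ∈ Icc y (y + s) ∧
      (p i.castSucc).1 + (τ - t i.castSucc) / (t i.succ - t i.castSucc) *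
        ((p i.succ).1 - (p i.castSucc).1) ∈ Icc x (x + s)) := by
  rw [hT i τ (Ico_subset_Icc_self hτ), mem_Square]
  have e1 : (p i.castSucc + ((τ - t i.castSucc) / (t i.succ - t i.castSucc)) •
      (p i.succ - p i.castSucc)).1
      = (p i.castSucc).1 + (τ - t i.castSucc) / (t i.succ - t i.castSucc) *
        ((p i.succ).1 - (p i.castSucc).1) := by
    simp [smul_eq_mul]
  have e2 : (p i.castSucc + ((τ - t i.castSucc) / (t i.succ - t i.castSucc)) •
      (p i.succ - p i.castSucc)).2 = (p i.castSucc).2 := by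
    simp [smul_eq_mul, ← hhi]
  rw [e1, e2, and_comm]

include hT in
lemma Wset_hor_eq {i : Fin n} (hhi : (p i.castSucc).2 = (p i.succ).2) (x y : ℝ)
    (hy : (p i.castSucc).2 ∈ Icc y (y + s)) :
    Wset n s t T x y i = {τ ∈ Ico (t i.castSucc) (t i.succ) |
      (p i.castSucc).1 + (τ - t i.castSucc) / (t i.succ - t i.castSucc) *
        ((p i.succ).1 - (p i.castSucc).1) ∈ Icc x (x + s)} := by
  ext τ
  simp only [Wset, mem_setOf_eq, and_congr_right_iff]
  intro hτ
  rw [Wset_hor_mem hT hhi x y hτ]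
  simp [hy]

include hT in
lemma Wset_hor_empty {i : Fin n} (hhi : (p i.castSucc).2 = (p i.succ).2) (x y : ℝ)
    (hy : (p i.castSucc).2 ∉ Icc y (y + s)) :
    Wset n s t T x y i = ∅ := by
  ext τ
  simp only [Wset, mem_setOf_eq, mem_empty_iff_false, iff_false, not_and]
  intro hτ
  rw [Wset_hor_mem hT hhi x y hτ]
  tauto

include ht in
lemma Wset_disj (x y : ℝ) {i j : Fin n} (hij : i ≠ j) :
    Disjoint (Wset n s t T x y i) (Wset n s t T x y j) := by
  have key : ∀ i j : Fin n, i < j →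
      Disjoint (Ico (t i.castSucc) (t i.succ)) (Ico (t j.castSucc) (t j.succ)) := by
    intro i j h
    rw [Set.Ico_disjoint_Ico]
    have h1 : (i.succ : Fin (n+1)) ≤ j.castSucc := by
      simp only [Fin.le_def, Fin.val_succ, Fin.coe_castSucc]
      exact h
    exact le_trans inf_le_left (le_trans (ht.monotone h1) le_sup_right)
  have hsub : ∀ (k : Fin n), Wset n s t T x y k ⊆ Ico (t k.castSucc) (t k.succ) :=
    fun k => sep_subset _ _
  rcases hij.lt_or_gt with h | h
  · exact Set.disjoint_of_subset (hsub i) (hsub j) (key i j h)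
  · exact (Set.disjoint_of_subset (hsub j) (hsub i) (key j i h)).symm

include hT ht in
lemma Wset_lower (x y : ℝ) (F : Finset (Fin n)) :
    ∑ i ∈ F, volume (Wset n s t T x y i) ≤ wgt s (t 0) (t (Fin.last n)) T x y := by
  rw [wgt, ← measure_biUnion_finset (fun i _ j _ hij => Wset_disj ht x y hij)
    (fun i _ => Wset_meas hT x y i)]
  apply measure_mono
  intro τ hτ
  simp only [mem_iUnion] at hτ
  obtain ⟨i, _, hτ1, hτ2⟩ := hτ
  refine ⟨⟨?_, ?_⟩, hτ2⟩
  · exact le_trans (ht.monotone (Fin.zero_le _)) hτ1.1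
  · exact le_trans (le_of_lt hτ1.2) (ht.monotone (Fin.le_last _))

end branch

section branchmain

variable {n : ℕ} {s : ℝ} {t : Fin (n+1) → ℝ} {p : Fin (n+1) → ℝ × ℝ} {T : ℝ → ℝ × ℝ}

lemma horiz_branch (hs : 0 < s) (ht : StrictMono t)
    (hT : ∀ i : Fin n, ∀ τ ∈ Icc (t i.castSucc) (t i.succ),
      T τ = p i.castSucc +
        ((τ - t i.castSucc) / (t i.succ - t i.castSucc)) • (p i.succ - p i.castSucc))
    (hnd : ∀ i : Fin n, p i.castSucc ≠ p i.succ)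
    (a b : ℝ) (hvtx : ∀ j, p j ∉ Square s a b) :
    ∑ i ∈ Finset.univ.filter (fun i : Fin n => (p i.castSucc).2 = (p i.succ).2),
        volume (Wset n s t T a b i)
      ≤ 2 * ⨆ j : Fin (n + 1),
      ⨆ q ∈ ({((p j).1, (p j).2), ((p j).1 - s, (p j).2),
              ((p j).1, (p j).2 - s), ((p j).1 - s, (p j).2 - s)} : Set (ℝ × ℝ)),
        wgt s (t 0) (t (Fin.last n)) T q.1 q.2 := by
  classical
  set S := ⨆ j : Fin (n + 1),
      ⨆ q ∈ ({((p j).1, (p j).2), ((p j).1 - s, (p j).2),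
              ((p j).1, (p j).2 - s), ((p j).1 - s, (p j).2 - s)} : Set (ℝ × ℝ)),
        wgt s (t 0) (t (Fin.last n)) T q.1 q.2 with hS
  have hSb : ∀ (j : Fin (n+1)) (q : ℝ × ℝ),
      q ∈ ({((p j).1, (p j).2), ((p j).1 - s, (p j).2),
              ((p j).1, (p j).2 - s), ((p j).1 - s, (p j).2 - s)} : Set (ℝ × ℝ)) →
      wgt s (t 0) (t (Fin.last n)) T q.1 q.2 ≤ S := by
    intro j q hq
    rw [hS]
    exact le_iSup_of_le j (le_iSup₂_of_le q hq le_rfl)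
  have hlu : ∀ i : Fin n, t i.castSucc < t i.succ := fun i => ht Fin.castSucc_lt_succ
  set H0 := Finset.univ.filter (fun i : Fin n => (p i.castSucc).2 = (p i.succ).2) with hH0
  set H1 := H0.filter (fun i : Fin n => (Wset n s t T a b i).Nonempty) with hH1
  by_cases hH1ne : H1.Nonempty
  swap
  · have hz : ∑ i ∈ H0, volume (Wset n s t T a b i) = 0 := by
      apply Finset.sum_eq_zero
      intro i hi
      have : Wset n s t T a b i = ∅ := by
        by_contra hne
        exact hH1ne ⟨i, Finset.mem_filter.2 ⟨hi, nonempty_iff_ne_empty.2 hne⟩⟩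
      rw [this]; exact measure_empty
    rw [hz]; exact zero_le
  -- chord facts for members of H1
  have hH1hor : ∀ i ∈ H1, (p i.castSucc).2 = (p i.succ).2 := by
    intro i hi
    have := Finset.mem_filter.1 ((Finset.mem_filter.1 hi).1)
    exact this.2
  have hH1y : ∀ i ∈ H1, (p i.castSucc).2 ∈ Icc b (b + s) := by
    intro i hi
    by_contra hy
    have he := Wset_hor_empty hT (hH1hor i hi) a b hy
    have := (Finset.mem_filter.1 hi).2
    rw [he] at this
    exact Set.not_nonempty_empty this
  have hchord : ∀ i ∈ H1,
      min (p i.castSucc).1 (p i.succ).1 < a ∧ a + s < max (p i.castSucc).1 (p i.succ).1 := by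
    intro i hi
    obtain ⟨τ0, hτ01, hτ02⟩ := by
      have h := (Finset.mem_filter.1 hi).2
      rw [Wset_hor_eq hT (hH1hor i hi) a b (hH1y i hi)] at h
      exact h
    -- T τ0 x-coordinate lies between the endpoints' x-coordinates
    have hr0 : 0 ≤ (τ0 - t i.castSucc) / (t i.succ - t i.castSucc) :=
      div_nonneg (by linarith [hτ01.1]) (by linarith [hlu i])
    have hr1 : (τ0 - t i.castSucc) / (t i.succ - t i.castSucc) ≤ 1 := by
      rw [div_le_one (by linarith [hlu i])]
      linarith [hτ01.2]
    have hbet := mem_between hr0 hr1 (c := (p i.castSucc).1)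
      (d := (p i.succ).1 - (p i.castSucc).1)
    rw [add_sub_cancel] at hbet
    have hmin : min (p i.castSucc).1 (p i.succ).1 ≤ a + s := le_trans hbet.1 hτ02.2
    have hmax : a ≤ max (p i.castSucc).1 (p i.succ).1 := le_trans hτ02.1 hbet.2
    -- endpoints are not in the square
    have hx0 : (p i.castSucc).1 < a ∨ a + s < (p i.castSucc).1 := by
      have h := hvtx i.castSucc
      rw [mem_Square] at h
      rcases not_and_or.1 h with h' | h'
      · rw [mem_Icc] at h'
        rcases lt_or_ge (p i.castSucc).1 a with h'' | h''
        · exact Or.inl h''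
        · exact Or.inr (not_le.1 fun hle => h' ⟨h'', hle⟩)
      · exact absurd (hH1y i hi) h'
    have hx1 : (p i.succ).1 < a ∨ a + s < (p i.succ).1 := by
      have h := hvtx i.succ
      rw [mem_Square] at h
      rcases not_and_or.1 h with h' | h'
      · rw [mem_Icc] at h'
        rcases lt_or_ge (p i.succ).1 a with h'' | h''
        · exact Or.inl h''
        · exact Or.inr (not_le.1 fun hle => h' ⟨h'', hle⟩)
      · exact absurd (by rw [← hH1hor i hi]; exact hH1y i hi) h'
    rcases hx0 with h0 | h0 <;> rcases hx1 with h1 | h1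
    · exact absurd hmax (not_le.2 (by calc max (p i.castSucc).1 (p i.succ).1 < a := max_lt h0 h1))
    · exact ⟨min_lt_iff.2 (Or.inl h0), lt_max_iff.2 (Or.inr h1)⟩
    · exact ⟨min_lt_iff.2 (Or.inr h1), lt_max_iff.2 (Or.inl h0)⟩
    · exact absurd hmin (not_le.2 (lt_min (by linarith) (by linarith)))
  -- pick the edge in H1 whose right endpoint is leftmost
  obtain ⟨i0, hi0F, hi0min⟩ := Finset.exists_min_image H1
    (fun i => max (p i.castSucc).1 (p i.succ).1) hH1ne
  obtain ⟨j, hjx, hjy⟩ : ∃ j : Fin (n+1),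
      (p j).1 = max (p i0.castSucc).1 (p i0.succ).1 ∧ (p j).2 = (p i0.castSucc).2 := by
    rcases le_total (p i0.castSucc).1 (p i0.succ).1 with h | h
    · exact ⟨i0.succ, (max_eq_right h).symm, (hH1hor i0 hi0F).symm⟩
    · exact ⟨i0.castSucc, (max_eq_left h).symm, rfl⟩
  have hjy' : (p j).2 ∈ Icc b (b + s) := hjy ▸ hH1y i0 hi0F
  have hjfar : a + s < (p j).1 := hjx ▸ (hchord i0 hi0F).2
  -- per-edge comparison
  have hper : ∀ i ∈ H0, volume (Wset n s t T a b i) ≤ volume (Wset n s t T ((p j).1 - s) b i) := by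
    intro i hi
    by_cases hne : (Wset n s t T a b i).Nonempty
    swap
    · rw [Set.not_nonempty_iff_eq_empty.1 hne, measure_empty]; exact zero_le
    have hiH1 : i ∈ H1 := Finset.mem_filter.2 ⟨hi, hne⟩
    have hhi := hH1hor i hiH1
    have hyi := hH1y i hiH1
    rw [Wset_hor_eq hT hhi a b hyi, Wset_hor_eq hT hhi ((p j).1 - s) b hyi]
    have hcd : (p i.castSucc).1 + ((p i.succ).1 - (p i.castSucc).1) = (p i.succ).1 := by ring
    have hdne : (p i.succ).1 - (p i.castSucc).1 ≠ 0 := by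
      intro h
      exact hnd i (Prod.ext (by linarith [sub_eq_zero.1 h]) hhi)
    apply vol_mono_1d (hlu i) hdne
    · linarith
    · rw [hcd]
      have h1 := (hchord i hiH1).1
      linarith
    · rw [hcd]
      have h2 : (p j).1 ≤ max (p i.castSucc).1 (p i.succ).1 := hjx ▸ hi0min i hiH1
      linarith
  -- the anchored squares bound
  have hanch : wgt s (t 0) (t (Fin.last n)) T ((p j).1 - s) b ≤ S + S := by
    have hsub : {τ ∈ Icc (t 0) (t (Fin.last n)) | T τ ∈ Square s ((p j).1 - s) b} ⊆
        {τ ∈ Icc (t 0) (t (Fin.last n)) | T τ ∈ Square s ((p j).1 - s) ((p j).2 - s)} ∪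
        {τ ∈ Icc (t 0) (t (Fin.last n)) | T τ ∈ Square s ((p j).1 - s) ((p j).2)} := by
      rintro τ ⟨hτ1, hτ2⟩
      rw [mem_Square] at hτ2
      rcases le_total (T τ).2 (p j).2 with h | h
      · left
        exact ⟨hτ1, mem_Square.2 ⟨hτ2.1, ⟨by linarith [hτ2.2.1, hjy'.2], by linarith⟩⟩⟩
      · right
        exact ⟨hτ1, mem_Square.2 ⟨hτ2.1, ⟨h, by linarith [hτ2.2.2, hjy'.1]⟩⟩⟩
    calc wgt s (t 0) (t (Fin.last n)) T ((p j).1 - s) b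
        ≤ volume ({τ ∈ Icc (t 0) (t (Fin.last n)) | T τ ∈ Square s ((p j).1 - s) ((p j).2 - s)} ∪
          {τ ∈ Icc (t 0) (t (Fin.last n)) | T τ ∈ Square s ((p j).1 - s) ((p j).2)}) :=
          measure_mono hsub
      _ ≤ wgt s (t 0) (t (Fin.last n)) T ((p j).1 - s) ((p j).2 - s) +
          wgt s (t 0) (t (Fin.last n)) T ((p j).1 - s) ((p j).2) := measure_union_le _ _
      _ ≤ S + S := by
          gcongr
          · exact hSb j ((p j).1 - s, (p j).2 - s) (by simp)
          · exact hSb j ((p j).1 - s, (p j).2) (by simp)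
  calc ∑ i ∈ H0, volume (Wset n s t T a b i)
      ≤ ∑ i ∈ H0, volume (Wset n s t T ((p j).1 - s) b i) := Finset.sum_le_sum hper
    _ ≤ wgt s (t 0) (t (Fin.last n)) T ((p j).1 - s) b := Wset_lower hT ht _ _ _
    _ ≤ S + S := hanch
    _ = 2 * S := (two_mul S).symm

end branchmain

theorem corner_squares_quarter_hotspot
    (n : ℕ) (hn : 1 ≤ n) (s : ℝ) (hs : 0 < s)
    (t : Fin (n + 1) → ℝ) (ht : StrictMono t)
    (p : Fin (n + 1) → ℝ × ℝ)
    (T : ℝ → ℝ × ℝ)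
    (hT : ∀ i : Fin n, ∀ τ ∈ Icc (t i.castSucc) (t i.succ),
      T τ = p i.castSucc +
        ((τ - t i.castSucc) / (t i.succ - t i.castSucc)) • (p i.succ - p i.castSucc))
    (horth : ∀ i : Fin n,
      (p i.castSucc).1 = (p i.succ).1 ∨ (p i.castSucc).2 = (p i.succ).2)
    (hnd : ∀ i : Fin n, p i.castSucc ≠ p i.succ) :
    (⨆ j : Fin (n + 1),
      ⨆ q ∈ ({((p j).1, (p j).2), ((p j).1 - s, (p j).2),
              ((p j).1, (p j).2 - s), ((p j).1 - s, (p j).2 - s)} : Set (ℝ × ℝ)),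
        wgt s (t 0) (t (Fin.last n)) T q.1 q.2) ≥
      (⨆ q : ℝ × ℝ, wgt s (t 0) (t (Fin.last n)) T q.1 q.2) / 4 := by
  classical
  rw [ge_iff_le]
  set S := ⨆ j : Fin (n + 1),
      ⨆ q ∈ ({((p j).1, (p j).2), ((p j).1 - s, (p j).2),
              ((p j).1, (p j).2 - s), ((p j).1 - s, (p j).2 - s)} : Set (ℝ × ℝ)),
        wgt s (t 0) (t (Fin.last n)) T q.1 q.2 with hSdef
  have hSb : ∀ (j : Fin (n+1)) (q : ℝ × ℝ),
      q ∈ ({((p j).1, (p j).2), ((p j).1 - s, (p j).2),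
              ((p j).1, (p j).2 - s), ((p j).1 - s, (p j).2 - s)} : Set (ℝ × ℝ)) →
      wgt s (t 0) (t (Fin.last n)) T q.1 q.2 ≤ S := by
    intro j q hq
    rw [hSdef]
    exact le_iSup_of_le j (le_iSup₂_of_le q hq le_rfl)
  have key : ∀ a b : ℝ, wgt s (t 0) (t (Fin.last n)) T a b ≤ 4 * S := by
    intro a b
    by_cases hvtx : ∃ j, p j ∈ Square s a b
    · -- a vertex of the trajectory lies in the square
      obtain ⟨j, hj⟩ := hvtx
      rw [mem_Square] at hj
      have hsub : {τ ∈ Icc (t 0) (t (Fin.last n)) | T τ ∈ Square s a b} ⊆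
          ({τ ∈ Icc (t 0) (t (Fin.last n)) | T τ ∈ Square s ((p j).1 - s) ((p j).2 - s)} ∪
           {τ ∈ Icc (t 0) (t (Fin.last n)) | T τ ∈ Square s ((p j).1 - s) ((p j).2)}) ∪
          ({τ ∈ Icc (t 0) (t (Fin.last n)) | T τ ∈ Square s ((p j).1) ((p j).2 - s)} ∪
           {τ ∈ Icc (t 0) (t (Fin.last n)) | T τ ∈ Square s ((p j).1) ((p j).2)}) := by
        rintro τ ⟨hτ1, hτ2⟩
        rw [mem_Square] at hτ2
        have hx := hτ2.1
        have hy := hτ2.2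
        rcases le_total (T τ).1 (p j).1 with h1 | h1 <;> rcases le_total (T τ).2 (p j).2 with h2 | h2
        · exact Or.inl (Or.inl ⟨hτ1, mem_Square.2
            ⟨⟨by linarith [hx.1, hj.1.2], by linarith⟩, ⟨by linarith [hy.1, hj.2.2], by linarith⟩⟩⟩)
        · exact Or.inl (Or.inr ⟨hτ1, mem_Square.2
            ⟨⟨by linarith [hx.1, hj.1.2], by linarith⟩, ⟨h2, by linarith [hy.2, hj.2.1]⟩⟩⟩)
        · exact Or.inr (Or.inl ⟨hτ1, mem_Square.2
            ⟨⟨h1, by linarith [hx.2, hj.1.1]⟩, ⟨by linarith [hy.1, hj.2.2], by linarith⟩⟩⟩)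
        · exact Or.inr (Or.inr ⟨hτ1, mem_Square.2
            ⟨⟨h1, by linarith [hx.2, hj.1.1]⟩, ⟨h2, by linarith [hy.2, hj.2.1]⟩⟩⟩)
      calc wgt s (t 0) (t (Fin.last n)) T a b ≤ volume _ := measure_mono hsub
        _ ≤ volume ({τ ∈ Icc (t 0) (t (Fin.last n)) | T τ ∈ Square s ((p j).1 - s) ((p j).2 - s)} ∪
           {τ ∈ Icc (t 0) (t (Fin.last n)) | T τ ∈ Square s ((p j).1 - s) ((p j).2)}) +
            volume ({τ ∈ Icc (t 0) (t (Fin.last n)) | T τ ∈ Square s ((p j).1) ((p j).2 - s)} ∪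
           {τ ∈ Icc (t 0) (t (Fin.last n)) | T τ ∈ Square s ((p j).1) ((p j).2)}) :=
            measure_union_le _ _
        _ ≤ (wgt s (t 0) (t (Fin.last n)) T ((p j).1 - s) ((p j).2 - s) +
             wgt s (t 0) (t (Fin.last n)) T ((p j).1 - s) ((p j).2)) +
            (wgt s (t 0) (t (Fin.last n)) T ((p j).1) ((p j).2 - s) +
             wgt s (t 0) (t (Fin.last n)) T ((p j).1) ((p j).2)) := by
            gcongr <;> exact measure_union_le _ _
        _ ≤ (S + S) + (S + S) := by
            gcongr
            · exact hSb j ((p j).1 - s, (p j).2 - s) (by simp)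
            · exact hSb j ((p j).1 - s, (p j).2) (by simp)
            · exact hSb j ((p j).1, (p j).2 - s) (by simp)
            · exact hSb j ((p j).1, (p j).2) (by simp)
        _ = 4 * S := by ring
    · push_neg at hvtx
      -- no vertex in the square : upper bound by sum over edges
      have hupper : wgt s (t 0) (t (Fin.last n)) T a b
          ≤ ∑ i : Fin n, volume (Wset n s t T a b i) := by
        rw [wgt]
        calc volume {τ ∈ Icc (t 0) (t (Fin.last n)) | T τ ∈ Square s a b}
            ≤ volume ((⋃ i : Fin n, Wset n s t T a b i) ∪ {t (Fin.last n)}) := by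
              apply measure_mono
              rintro τ ⟨hτ1, hτ2⟩
              rcases Icc_cover hn t ht hτ1 with h | h
              · obtain ⟨SS, ⟨i, rfl⟩, hi⟩ := h
                exact Or.inl (mem_iUnion.2 ⟨i, hi, hτ2⟩)
              · exact Or.inr h
          _ ≤ volume (⋃ i : Fin n, Wset n s t T a b i) + volume ({t (Fin.last n)} : Set ℝ) :=
              measure_union_le _ _
          _ ≤ (∑' i : Fin n, volume (Wset n s t T a b i)) + 0 := by
              gcongr
              · exact measure_iUnion_le _
              · exact le_of_eq (measure_singleton _)
          _ = ∑ i : Fin n, volume (Wset n s t T a b i) := by rw [add_zero, tsum_fintype]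
      have hsplit := Finset.sum_filter_add_sum_filter_not Finset.univ
        (fun i : Fin n => (p i.castSucc).2 = (p i.succ).2)
        (fun i => volume (Wset n s t T a b i))
      -- horizontal part
      have hhor : ∑ i ∈ Finset.univ.filter (fun i : Fin n => (p i.castSucc).2 = (p i.succ).2),
          volume (Wset n s t T a b i) ≤ 2 * S := by
        have h := horiz_branch hs ht hT hnd a b hvtx
        rw [← hSdef] at h
        exact h
      -- vertical part via coordinate swap
      have hver : ∑ i ∈ Finset.univ.filter (fun i : Fin n => ¬ (p i.castSucc).2 = (p i.succ).2),
          volume (Wset n s t T a b i) ≤ 2 * S := by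
        set p' : Fin (n+1) → ℝ × ℝ := fun j => ((p j).2, (p j).1) with hp'
        set T' : ℝ → ℝ × ℝ := fun τ => ((T τ).2, (T τ).1) with hT'def
        have hT' : ∀ i : Fin n, ∀ τ ∈ Icc (t i.castSucc) (t i.succ),
            T' τ = p' i.castSucc +
              ((τ - t i.castSucc) / (t i.succ - t i.castSucc)) • (p' i.succ - p' i.castSucc) := by
          intro i τ hτ
          have h := hT i τ hτ
          simp only [hT'def, hp', h]
          apply Prod.ext <;> simp [smul_eq_mul]
        have hnd' : ∀ i : Fin n, p' i.castSucc ≠ p' i.succ := by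
          intro i h
          apply hnd i
          rw [hp'] at h
          simp only [Prod.mk.injEq] at h
          exact Prod.ext h.2 h.1
        have hvtx' : ∀ j, p' j ∉ Square s b a := by
          intro j h
          rw [mem_Square] at h
          exact hvtx j (mem_Square.2 ⟨h.2, h.1⟩)
        have hWeq : ∀ i : Fin n, Wset n s t T' b a i = Wset n s t T a b i := by
          intro i
          ext τ
          simp only [Wset, mem_setOf_eq]
          apply and_congr_right
          intro _
          constructor
          · intro h
            rw [mem_Square] at h
            exact mem_Square.2 ⟨h.2, h.1⟩
          · intro h
            rw [mem_Square] at h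
            exact mem_Square.2 ⟨h.2, h.1⟩
        have hfil : Finset.univ.filter (fun i : Fin n => ¬ (p i.castSucc).2 = (p i.succ).2)
            ⊆ Finset.univ.filter (fun i : Fin n => (p' i.castSucc).2 = (p' i.succ).2) := by
          intro i hi
          simp only [Finset.mem_filter, Finset.mem_univ, true_and] at hi ⊢
          rcases horth i with h | h
          · exact h
          · exact absurd h hi
        have hbranch := horiz_branch (t := t) (p := p') (T := T') hs ht hT' hnd' b a hvtx'
        have hS'le : (⨆ j : Fin (n + 1),
            ⨆ q ∈ ({((p' j).1, (p' j).2), ((p' j).1 - s, (p' j).2),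
                ((p' j).1, (p' j).2 - s), ((p' j).1 - s, (p' j).2 - s)} : Set (ℝ × ℝ)),
              wgt s (t 0) (t (Fin.last n)) T' q.1 q.2) ≤ S := by
          apply iSup_le
          intro j
          apply iSup₂_le
          intro q hq
          have hw : ∀ x y : ℝ, wgt s (t 0) (t (Fin.last n)) T' x y
              = wgt s (t 0) (t (Fin.last n)) T y x := by
            intro x y
            rw [wgt, wgt]
            congr 1
            ext τ
            simp only [mem_setOf_eq]
            apply and_congr_right
            intro _
            constructor
            · intro h
              rw [mem_Square] at h
              exact mem_Square.2 ⟨h.2, h.1⟩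
            · intro h
              rw [mem_Square] at h
              exact mem_Square.2 ⟨h.2, h.1⟩
          simp only [Set.mem_insert_iff, Set.mem_singleton_iff] at hq
          rcases hq with rfl | rfl | rfl | rfl
          · rw [hw]
            exact hSb j ((p j).1, (p j).2) (by simp [hp'])
          · rw [hw]
            exact hSb j ((p j).1, (p j).2 - s) (by simp [hp'])
          · rw [hw]
            exact hSb j ((p j).1 - s, (p j).2) (by simp [hp'])
          · rw [hw]
            exact hSb j ((p j).1 - s, (p j).2 - s) (by simp [hp'])
        calc ∑ i ∈ Finset.univ.filter (fun i : Fin n => ¬ (p i.castSucc).2 = (p i.succ).2),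
              volume (Wset n s t T a b i)
            ≤ ∑ i ∈ Finset.univ.filter (fun i : Fin n => (p' i.castSucc).2 = (p' i.succ).2),
              volume (Wset n s t T a b i) := by
              apply Finset.sum_le_sum_of_subset
              intro i hi
              simp only [Finset.mem_filter, Finset.mem_univ, true_and] at hi ⊢
              exact (Finset.mem_filter.1 (hfil (Finset.mem_filter.2 ⟨Finset.mem_univ _, hi⟩))).2
          _ = ∑ i ∈ Finset.univ.filter (fun i : Fin n => (p' i.castSucc).2 = (p' i.succ).2),
              volume (Wset n s t T' b a i) := by
              apply Finset.sum_congr rfl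
              intro i _
              rw [hWeq i]
          _ ≤ 2 * (⨆ j : Fin (n + 1),
              ⨆ q ∈ ({((p' j).1, (p' j).2), ((p' j).1 - s, (p' j).2),
                  ((p' j).1, (p' j).2 - s), ((p' j).1 - s, (p' j).2 - s)} : Set (ℝ × ℝ)),
                wgt s (t 0) (t (Fin.last n)) T' q.1 q.2) := hbranch
          _ ≤ 2 * S := by gcongr
      calc wgt s (t 0) (t (Fin.last n)) T a b
          ≤ ∑ i : Fin n, volume (Wset n s t T a b i) := hupper
        _ = ∑ i ∈ Finset.univ.filter (fun i : Fin n => (p i.castSucc).2 = (p i.succ).2),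
              volume (Wset n s t T a b i) +
            ∑ i ∈ Finset.univ.filter (fun i : Fin n => ¬ (p i.castSucc).2 = (p i.succ).2),
              volume (Wset n s t T a b i) := hsplit.symm
        _ ≤ 2 * S + 2 * S := add_le_add hhor hver
        _ = 4 * S := by ring
  have h1 : (⨆ q : ℝ × ℝ, wgt s (t 0) (t (Fin.last n)) T q.1 q.2) ≤ 4 * S :=
    iSup_le fun q => key q.1 q.2
  calc (⨆ q : ℝ × ℝ, wgt s (t 0) (t (Fin.last n)) T q.1 q.2) / 4
      ≤ (4 * S) / 4 := ENNReal.div_le_div_right h1 4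
    _ = S := by
        rw [mul_comm, mul_div_assoc, ENNReal.div_self (by norm_num) (by norm_num), mul_one]
end

section
/- Let H be a horizontal trajectory with n edges and fix a side length s > 0. Then h(H) = sup over j ∈ {0, …, n} and x ∈ ℝ of w_H(x, (p_j).2 − s); that is, the maximum weight over all squares equals the supremum of the weights of the tracked squares, namely those whose upper side has the same y-coordinate as some vertex of H. -/
open MeasureTheory Set
open scoped ENNReal

/-- Any point of `[t 0, t (last n)]` lies in some segment interval, when `n > 0`. -/
lemma exists_segment {n : ℕ} (hn : 0 < n) (t : Fin (n + 1) → ℝ) (ht : Monotone t)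
    {τ : ℝ} (hτ : τ ∈ Icc (t 0) (t (Fin.last n))) :
    ∃ i : Fin n, τ ∈ Icc (t i.castSucc) (t i.succ) := by
  classical
  set F : Finset (Fin n) := Finset.univ.filter (fun i => t i.castSucc ≤ τ) with hF
  have h0 : (⟨0, hn⟩ : Fin n) ∈ F := by
    have : ((⟨0, hn⟩ : Fin n).castSucc : Fin (n + 1)) = 0 := by
      ext; simp
    simp [hF, this, hτ.1]
  have hFne : F.Nonempty := ⟨_, h0⟩
  set i : Fin n := F.max' hFne with hi
  have hiF : i ∈ F := F.max'_mem hFne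
  have hle : t i.castSucc ≤ τ := by
    simpa [hF] using hiF
  refine ⟨i, hle, ?_⟩
  by_cases hlast : (i : ℕ) + 1 = n
  · have : i.succ = Fin.last n := by ext; simp [hlast]
    rw [this]; exact hτ.2
  · have hlt : (i : ℕ) + 1 < n := lt_of_le_of_ne i.2 hlast
    have hnot : (⟨(i : ℕ) + 1, hlt⟩ : Fin n) ∉ F := by
      intro hmem
      have := F.le_max' _ hmem
      rw [← hi] at this
      have : (i : ℕ) + 1 ≤ (i : ℕ) := this
      omega
    have : ¬ t ((⟨(i : ℕ) + 1, hlt⟩ : Fin n).castSucc) ≤ τ := by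
      simpa [hF] using hnot
    have heq : ((⟨(i : ℕ) + 1, hlt⟩ : Fin n).castSucc : Fin (n + 1)) = i.succ := by
      ext; simp
    rw [heq] at this
    linarith [not_le.mp this]

theorem hotspot_eq_sup_tracked_squares
    (n : ℕ) (s : ℝ) (hs : 0 < s)
    (t : Fin (n + 1) → ℝ) (ht : StrictMono t)
    (p : Fin (n + 1) → ℝ × ℝ)
    (T : ℝ → ℝ × ℝ)
    (hT : ∀ i : Fin n, ∀ τ ∈ Icc (t i.castSucc) (t i.succ),
      T τ = p i.castSucc +
        ((τ - t i.castSucc) / (t i.succ - t i.castSucc)) • (p i.succ - p i.castSucc))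
    (hhoriz : ∀ i : Fin n, (p i.castSucc).2 = (p i.succ).2) :
    (⨆ q : ℝ × ℝ, wgt s (t 0) (t (Fin.last n)) T q.1 q.2) =
      ⨆ j : Fin (n + 1), ⨆ x : ℝ,
        wgt s (t 0) (t (Fin.last n)) T x ((p j).2 - s) := by
  classical
  rcases Nat.eq_zero_or_pos n with hn | hn
  · -- degenerate case: the time interval is a single point, all weights are zero
    subst hn
    have hz : ∀ x y : ℝ, wgt s (t 0) (t 0) T x y = 0 := by
      intro x y
      have hsub : {τ ∈ Icc (t 0) (t 0) | T τ ∈ Square s x y}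
          ⊆ Icc (t 0) (t 0) := by
        intro τ hτ; exact hτ.1
      refine le_antisymm (le_trans (measure_mono hsub) ?_) zero_le
      rw [Real.volume_Icc]
      simp
    simp [hz]
  · -- main case
    apply le_antisymm
    · apply iSup_le
      rintro ⟨x, y⟩
      dsimp only
      by_cases hS : ∃ i : Fin (n + 1), (p i).2 ∈ Icc y (y + s)
      · -- pick the vertex with maximal y-coordinate among those in [y, y+s]
        set F : Finset (Fin (n + 1)) :=
          Finset.univ.filter (fun i => (p i).2 ∈ Icc y (y + s)) with hF
        have hFne : F.Nonempty := by
          obtain ⟨i, hi⟩ := hS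
          exact ⟨i, by simp only [hF, Finset.mem_filter, Finset.mem_univ, true_and]; exact hi⟩
        obtain ⟨j, hjF, hjmax⟩ := F.exists_max_image (fun i => (p i).2) hFne
        have hjmem : (p j).2 ∈ Icc y (y + s) := by simpa [hF] using hjF
        have hsub : {τ ∈ Icc (t 0) (t (Fin.last n)) | T τ ∈ Square s x y}
            ⊆ {τ ∈ Icc (t 0) (t (Fin.last n)) | T τ ∈ Square s x ((p j).2 - s)} := by
          rintro τ ⟨hτI, hτS⟩
          obtain ⟨i, hseg⟩ := exists_segment hn t ht.monotone hτI
          have hTy : (T τ).2 = (p i.castSucc).2 := by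
            rw [hT i τ hseg]
            have := hhoriz i
            simp [Prod.snd_add, Prod.smul_snd, Prod.snd_sub, this]
          rw [Square, Set.mem_prod] at hτS
          have hyIcc : (p i.castSucc).2 ∈ Icc y (y + s) := hTy ▸ hτS.2
          have hiF : i.castSucc ∈ F := by simp only [hF, Finset.mem_filter, Finset.mem_univ, true_and]; exact hyIcc
          have hmax : (p i.castSucc).2 ≤ (p j).2 := hjmax _ hiF
          refine ⟨hτI, ?_⟩
          rw [Square, Set.mem_prod]
          refine ⟨hτS.1, ?_⟩
          rw [hTy]
          constructor
          · linarith [hyIcc.1, hjmem.2]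
          · linarith [hmax]
        calc wgt s (t 0) (t (Fin.last n)) T x y
            ≤ wgt s (t 0) (t (Fin.last n)) T x ((p j).2 - s) := measure_mono hsub
          _ ≤ ⨆ x' : ℝ, wgt s (t 0) (t (Fin.last n)) T x' ((p j).2 - s) :=
              le_iSup (fun x' => wgt s (t 0) (t (Fin.last n)) T x' ((p j).2 - s)) x
          _ ≤ _ := le_iSup (fun j => ⨆ x' : ℝ,
              wgt s (t 0) (t (Fin.last n)) T x' ((p j).2 - s)) j
      · -- no vertex in the strip: the weight is zero
        have hempty : {τ ∈ Icc (t 0) (t (Fin.last n)) | T τ ∈ Square s x y} = ∅ := by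
          ext τ
          simp only [Set.mem_setOf_eq, Set.mem_empty_iff_false, iff_false, not_and]
          rintro hτI hτS
          obtain ⟨i, hseg⟩ := exists_segment hn t ht.monotone hτI
          have hTy : (T τ).2 = (p i.castSucc).2 := by
            rw [hT i τ hseg]
            have := hhoriz i
            simp [Prod.snd_add, Prod.smul_snd, Prod.snd_sub, this]
          rw [Square, Set.mem_prod] at hτS
          exact hS ⟨i.castSucc, hTy ▸ hτS.2⟩
        rw [wgt, hempty]
        simp
    · apply iSup_le; intro j
      apply iSup_le; intro x
      exact le_iSup_of_le (x, (p j).2 - s) le_rfl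
end

section
/- Let T be a trajectory in ℝ³ with n ≥ 1 edges, each edge axis-parallel (for each 1 ≤ i ≤ n, the points p_{i−1} and p_i differ in at most one coordinate), and such that every edge parallel to the z-axis has positive length. Fix a side length s > 0. Then h(T) = sup over j ∈ {0, …, n}, (x, y) ∈ ℝ², and b ∈ {(p_j).3 − s, (p_j).3} of w_T(x, y, b); that is, the maximum cube weight is achieved, in the supremum, by cubes one of whose two xy-parallel face planes passes through a vertex of T. -/
open MeasureTheory Set
open scoped ENNReal

/-- `Cube s x y z` is the axis-parallel cube `[x, x+s] × [y, y+s] × [z, z+s]` in `ℝ³`. -/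
def Cube (s x y z : ℝ) : Set (ℝ × ℝ × ℝ) :=
  Icc x (x + s) ×ˢ Icc y (y + s) ×ˢ Icc z (z + s)

/-- The weight of `Cube s x y z` with respect to a trajectory `T` on `[t0, tn]`:
the Lebesgue measure of `{t ∈ [t0, tn] : T t ∈ Cube s x y z}`. -/
noncomputable def wgt3 (s t0 tn : ℝ) (T : ℝ → ℝ × ℝ × ℝ) (x y z : ℝ) : ℝ≥0∞ :=
  volume {τ ∈ Icc t0 tn | T τ ∈ Cube s x y z}

namespace CubeHotspot

lemma mem_cube {s x y w : ℝ} {q : ℝ × ℝ × ℝ} :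
    q ∈ Cube s x y w ↔ q.1 ∈ Icc x (x + s) ∧ q.2.1 ∈ Icc y (y + s) ∧ q.2.2 ∈ Icc w (w + s) := by
  rw [Cube, Set.mem_prod, Set.mem_prod]

lemma comp3 (c : ℝ) (P Q : ℝ × ℝ × ℝ) :
    (P + c • (Q - P)).2.2 = P.2.2 + c * (Q.2.2 - P.2.2) := rfl

lemma comp1 (c : ℝ) (P Q : ℝ × ℝ × ℝ) : (P + c • (Q - P)).1 = P.1 + c * (Q.1 - P.1) := rfl
lemma comp2 (c : ℝ) (P Q : ℝ × ℝ × ℝ) :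
    (P + c • (Q - P)).2.1 = P.2.1 + c * (Q.2.1 - P.2.1) := rfl

lemma stab {k e c u v : ℝ} (hne : ∀ w ∈ Ioo u v, k * w + e ≠ c) :
    (∀ w ∈ Icc u v, k * w + e ≤ c) ∨ (∀ w ∈ Icc u v, c ≤ k * w + e) := by
  by_cases h : ∃ w₁ ∈ Icc u v, k * w₁ + e < c
  · left
    obtain ⟨w₁, hw₁, hlt⟩ := h
    intro w₂ hw₂
    by_contra hgt
    push_neg at hgt
    have hk : k ≠ 0 := by
      rintro rfl; simp only [zero_mul, zero_add] at hlt hgt; linarith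
    have hcw' : k * ((c - e) / k) + e = c := by field_simp; ring
    rcases lt_or_gt_of_ne hk with hk0 | hk0
    · have h1 : (c - e) / k < w₁ := by nlinarith
      have h2 : w₂ < (c - e) / k := by nlinarith
      exact hne _ ⟨lt_of_le_of_lt hw₂.1 h2, lt_of_lt_of_le h1 hw₁.2⟩ hcw'
    · have h1 : w₁ < (c - e) / k := by nlinarith
      have h2 : (c - e) / k < w₂ := by nlinarith
      exact hne _ ⟨lt_of_le_of_lt hw₁.1 h1, lt_of_lt_of_le h2 hw₂.2⟩ hcw'
  · push_neg at h
    right; exact h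

lemma combo_le {θ : ℝ} (hθ0 : 0 ≤ θ) (hθ1 : θ ≤ 1) (X Y : ℝ) :
    ENNReal.ofReal ((1 - θ) * X + θ * Y) ≤
      ENNReal.ofReal (1 - θ) * ENNReal.ofReal X + ENNReal.ofReal θ * ENNReal.ofReal Y := by
  refine le_trans ENNReal.ofReal_add_le ?_
  exact add_le_add (le_of_eq (ENNReal.ofReal_mul (by linarith)))
    (le_of_eq (ENNReal.ofReal_mul hθ0))

lemma key {u v z : ℝ} (hz : z ∈ Ioo u v)
    {bb aa k₁ e₁ k₂ e₂ : ℝ}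
    (h1 : ∀ w ∈ Ioo u v, k₁ * w + e₁ ≠ bb)
    (h2 : ∀ w ∈ Ioo u v, k₂ * w + e₂ ≠ aa) :
    ENNReal.ofReal (min bb (k₁ * z + e₁) - max aa (k₂ * z + e₂)) ≤
      ENNReal.ofReal (1 - (z - u) / (v - u)) *
        ENNReal.ofReal (min bb (k₁ * u + e₁) - max aa (k₂ * u + e₂)) +
      ENNReal.ofReal ((z - u) / (v - u)) *
        ENNReal.ofReal (min bb (k₁ * v + e₁) - max aa (k₂ * v + e₂)) := by
  obtain ⟨hu, hv⟩ := hz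
  have huv : u < v := hu.trans hv
  set θ := (z - u) / (v - u) with hθ
  have hθ0 : 0 ≤ θ := div_nonneg (by linarith) (by linarith)
  have hθ1 : θ ≤ 1 := by
    rw [hθ, div_le_one (by linarith)]; linarith
  have hzc : z = (1 - θ) * u + θ * v := by
    have hvu : v - u ≠ 0 := by linarith
    rw [hθ]; field_simp; ring
  obtain ⟨A₁, C₁, hA₁⟩ : ∃ A C, ∀ w ∈ Icc u v, min bb (k₁ * w + e₁) = A * w + C := by
    rcases stab h1 with h | h
    · exact ⟨k₁, e₁, fun w hw => min_eq_right (h w hw)⟩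
    · exact ⟨0, bb, fun w hw => by rw [min_eq_left (h w hw), zero_mul, zero_add]⟩
  obtain ⟨A₂, C₂, hA₂⟩ : ∃ A C, ∀ w ∈ Icc u v, max aa (k₂ * w + e₂) = A * w + C := by
    rcases stab h2 with h | h
    · exact ⟨0, aa, fun w hw => by rw [max_eq_left (h w hw), zero_mul, zero_add]⟩
    · exact ⟨k₂, e₂, fun w hw => max_eq_right (h w hw)⟩
  rw [hA₁ z ⟨hu.le, hv.le⟩, hA₂ z ⟨hu.le, hv.le⟩,
      hA₁ u (left_mem_Icc.2 huv.le), hA₂ u (left_mem_Icc.2 huv.le),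
      hA₁ v (right_mem_Icc.2 huv.le), hA₂ v (right_mem_Icc.2 huv.le)]
  have hE : A₁ * z + C₁ - (A₂ * z + C₂) =
      (1 - θ) * (A₁ * u + C₁ - (A₂ * u + C₂)) + θ * (A₁ * v + C₁ - (A₂ * v + C₂)) := by
    rw [hzc]; ring
  rw [hE]
  exact combo_le hθ0 hθ1 _ _

lemma zset_pos {a b α k : ℝ} (s' w : ℝ) (hk : 0 < k) :
    {τ ∈ Icc a b | α + (τ - a) / k ∈ Icc w (w + s')} =
      Icc (max a (k * w + (a - α * k))) (min b (k * w + (k * s' + (a - α * k)))) := by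
  ext τ
  simp only [mem_setOf_eq, mem_Icc, max_le_iff, le_min_iff]
  have h1 : w ≤ α + (τ - a) / k ↔ k * w + (a - α * k) ≤ τ := by
    rw [← sub_le_iff_le_add', le_div_iff₀ hk]
    constructor <;> intro h <;> nlinarith [h]
  have h2 : α + (τ - a) / k ≤ w + s' ↔ τ ≤ k * w + (k * s' + (a - α * k)) := by
    have e1 : α + (τ - a) / k ≤ w + s' ↔ (τ - a) / k ≤ w + s' - α := by
      constructor <;> intro h <;> linarith
    rw [e1, div_le_iff₀ hk]
    constructor <;> intro h <;> nlinarith [h]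
  rw [h1, h2]
  tauto

lemma zset_neg {a b α k : ℝ} (s' w : ℝ) (hk : k < 0) :
    {τ ∈ Icc a b | α + (τ - a) / k ∈ Icc w (w + s')} =
      Icc (max a (k * w + (k * s' + (a - α * k)))) (min b (k * w + (a - α * k))) := by
  ext τ
  simp only [mem_setOf_eq, mem_Icc, max_le_iff, le_min_iff]
  have h1 : w ≤ α + (τ - a) / k ↔ τ ≤ k * w + (a - α * k) := by
    rw [← sub_le_iff_le_add', le_div_iff_of_neg hk]
    constructor <;> intro h <;> nlinarith [h]
  have h2 : α + (τ - a) / k ≤ w + s' ↔ k * w + (k * s' + (a - α * k)) ≤ τ := by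
    have e1 : α + (τ - a) / k ≤ w + s' ↔ (τ - a) / k ≤ w + s' - α := by
      constructor <;> intro h <;> linarith
    rw [e1, div_le_iff_of_neg hk]
    constructor <;> intro h <;> nlinarith [h]
  rw [h1, h2]
  tauto

lemma cover {n : ℕ} (hn : 1 ≤ n) {t : Fin (n + 1) → ℝ} (ht : StrictMono t) {τ : ℝ}
    (hτ : τ ∈ Icc (t 0) (t (Fin.last n))) :
    ∃ i : Fin n, τ ∈ Icc (t i.castSucc) (t i.succ) := by
  classical
  set F := Finset.univ.filter (fun i : Fin (n + 1) => t i ≤ τ) with hF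
  have h0 : (0 : Fin (n + 1)) ∈ F := by simp [hF]; exact hτ.1
  have hne : F.Nonempty := ⟨0, h0⟩
  set i₀ := F.max' hne with hi₀
  have hi₀m : i₀ ∈ F := F.max'_mem hne
  have ht₀ : t i₀ ≤ τ := by
    have := hi₀m
    rw [hF, Finset.mem_filter] at this
    exact this.2
  by_cases h : (i₀ : ℕ) < n
  · refine ⟨⟨(i₀ : ℕ), h⟩, ?_, ?_⟩
    · have hcs : (⟨(i₀ : ℕ), h⟩ : Fin n).castSucc = i₀ := by
        ext; simp
      rw [hcs]; exact ht₀
    · by_contra hlt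
      push_neg at hlt
      have hmem : (⟨(i₀ : ℕ), h⟩ : Fin n).succ ∈ F := by
        rw [hF, Finset.mem_filter]
        exact ⟨Finset.mem_univ _, hlt.le⟩
      have hle := F.le_max' _ hmem
      rw [Fin.le_def] at hle
      simp only [Fin.succ, Fin.val_last] at hle
      omega
  · have hlast : i₀ = Fin.last n := by
      ext
      simp only [Fin.val_last]
      have := i₀.isLt
      omega
    have hτeq : τ = t (Fin.last n) := le_antisymm hτ.2 (hlast ▸ ht₀)
    have hn' : n - 1 < n := by omega
    refine ⟨⟨n - 1, hn'⟩, ?_, ?_⟩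
    · rw [hτeq]
      exact ht.monotone (Fin.le_last _)
    · rw [hτeq]
      have hsucc : (⟨n - 1, hn'⟩ : Fin n).succ = Fin.last n := by
        ext; simp [Fin.succ, Fin.last]; omega
      rw [hsucc]

lemma piece_measurable {a b : ℝ} {P Q : ℝ × ℝ × ℝ} {T : ℝ → ℝ × ℝ × ℝ}
    (hT : ∀ τ ∈ Icc a b, T τ = P + ((τ - a) / (b - a)) • (Q - P)) (s x y w : ℝ) :
    MeasurableSet {τ ∈ Icc a b | T τ ∈ Cube s x y w} := by
  have hrw : {τ ∈ Icc a b | T τ ∈ Cube s x y w} =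
      Icc a b ∩ (fun τ : ℝ => P + ((τ - a) / (b - a)) • (Q - P)) ⁻¹' Cube s x y w := by
    ext τ
    simp only [mem_setOf_eq, mem_inter_iff, mem_preimage]
    constructor
    · rintro ⟨h1, h2⟩; exact ⟨h1, by rw [← hT τ h1]; exact h2⟩
    · rintro ⟨h1, h2⟩; exact ⟨h1, by rw [hT τ h1]; exact h2⟩
  rw [hrw]
  have hfm : Measurable (fun τ : ℝ => P + ((τ - a) / (b - a)) • (Q - P)) := by
    apply Measurable.const_add
    exact (((measurable_id.sub_const a).div_const (b - a)).smul_const (Q - P))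
  have hcm : MeasurableSet (Cube s x y w) := by
    rw [Cube]
    exact measurableSet_Icc.prod (measurableSet_Icc.prod measurableSet_Icc)
  exact measurableSet_Icc.inter (hfm hcm)

lemma decomp {n : ℕ} (hn : 1 ≤ n) {t : Fin (n + 1) → ℝ} (ht : StrictMono t)
    {p : Fin (n + 1) → ℝ × ℝ × ℝ} {T : ℝ → ℝ × ℝ × ℝ}
    (hT : ∀ i : Fin n, ∀ τ ∈ Icc (t i.castSucc) (t i.succ),
      T τ = p i.castSucc +
        ((τ - t i.castSucc) / (t i.succ - t i.castSucc)) • (p i.succ - p i.castSucc))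
    (s x y w : ℝ) :
    wgt3 s (t 0) (t (Fin.last n)) T x y w =
      ∑ i : Fin n, volume {τ ∈ Icc (t i.castSucc) (t i.succ) | T τ ∈ Cube s x y w} := by
  rw [wgt3]
  have hsets : {τ ∈ Icc (t 0) (t (Fin.last n)) | T τ ∈ Cube s x y w} =
      ⋃ i : Fin n, {τ ∈ Icc (t i.castSucc) (t i.succ) | T τ ∈ Cube s x y w} := by
    ext τ
    simp only [mem_setOf_eq, mem_iUnion]
    constructor
    · rintro ⟨hτ, hc⟩
      obtain ⟨i, hi⟩ := cover hn ht hτ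
      exact ⟨i, hi, hc⟩
    · rintro ⟨i, hi, hc⟩
      exact ⟨⟨le_trans (ht.monotone (Fin.zero_le _)) hi.1,
        le_trans hi.2 (ht.monotone (Fin.le_last _))⟩, hc⟩
  rw [hsets, measure_iUnion₀, tsum_fintype]
  · intro i j hij
    refine measure_mono_null (inter_subset_inter (sep_subset _ _) (sep_subset _ _)) ?_
    have key2 : ∀ i j : Fin n, i < j →
        volume (Icc (t i.castSucc) (t i.succ) ∩ Icc (t j.castSucc) (t j.succ)) = 0 := by
      intro i j h
      have hsub : Icc (t i.castSucc) (t i.succ) ∩ Icc (t j.castSucc) (t j.succ) ⊆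
          Icc (t j.castSucc) (t i.succ) := fun τ hτ => ⟨hτ.2.1, hτ.1.2⟩
      refine measure_mono_null hsub ?_
      rw [Real.volume_Icc]
      have hle : t i.succ ≤ t j.castSucc := by
        apply ht.monotone
        rw [Fin.le_def]
        simp only [Fin.val_succ, Fin.coe_castSucc]
        exact h
      simp only [ENNReal.ofReal_eq_zero]
      linarith
    rcases lt_or_gt_of_ne hij with h | h
    · exact key2 i j h
    · rw [inter_comm]; exact key2 j i h
  · intro i
    exact (piece_measurable (hT i) s x y w).nullMeasurableSet

lemma zrange {a b : ℝ} (hab : a < b) {P Q : ℝ × ℝ × ℝ} {T : ℝ → ℝ × ℝ × ℝ}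
    (hT : ∀ τ ∈ Icc a b, T τ = P + ((τ - a) / (b - a)) • (Q - P)) :
    ∀ τ ∈ Icc a b, min P.2.2 Q.2.2 ≤ (T τ).2.2 ∧ (T τ).2.2 ≤ max P.2.2 Q.2.2 := by
  intro τ hτ
  rw [hT τ hτ, comp3]
  have hr0 : 0 ≤ (τ - a) / (b - a) := div_nonneg (by linarith [hτ.1]) (by linarith)
  have hr1 : (τ - a) / (b - a) ≤ 1 := by
    rw [div_le_one (by linarith)]; linarith [hτ.2]
  set r := (τ - a) / (b - a)
  constructor
  · rcases le_total P.2.2 Q.2.2 with h | h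
    · nlinarith [min_le_left P.2.2 Q.2.2, mul_nonneg hr0 (sub_nonneg.2 h)]
    · nlinarith [min_le_right P.2.2 Q.2.2,
        mul_nonneg (sub_nonneg.2 hr1) (sub_nonneg.2 h)]
  · rcases le_total P.2.2 Q.2.2 with h | h
    · nlinarith [le_max_right P.2.2 Q.2.2,
        mul_nonneg (sub_nonneg.2 hr1) (sub_nonneg.2 h)]
    · nlinarith [le_max_left P.2.2 Q.2.2, mul_nonneg hr0 (sub_nonneg.2 h)]

lemma edge_bound {s x y u v z : ℝ} (hz : z ∈ Ioo u v)
    {a b : ℝ} (hab : a < b) {P Q : ℝ × ℝ × ℝ} {T : ℝ → ℝ × ℝ × ℝ}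
    (hT : ∀ τ ∈ Icc a b, T τ = P + ((τ - a) / (b - a)) • (Q - P))
    (haxis : (P.1 = Q.1 ∧ P.2.1 = Q.2.1) ∨ P.2.2 = Q.2.2)
    (havP : P.2.2 ∉ Ioo u v) (havPs : P.2.2 - s ∉ Ioo u v)
    (havQ : Q.2.2 ∉ Ioo u v) (havQs : Q.2.2 - s ∉ Ioo u v) :
    volume {τ ∈ Icc a b | T τ ∈ Cube s x y z} ≤
      ENNReal.ofReal (1 - (z - u) / (v - u)) * volume {τ ∈ Icc a b | T τ ∈ Cube s x y u} +
      ENNReal.ofReal ((z - u) / (v - u)) * volume {τ ∈ Icc a b | T τ ∈ Cube s x y v} := by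
  obtain ⟨hu, hv⟩ := hz
  have huv : u < v := hu.trans hv
  have hba : (0:ℝ) < b - a := sub_pos.2 hab
  have hθ0 : 0 ≤ (z - u) / (v - u) := div_nonneg (by linarith) (by linarith)
  have hθ1 : (z - u) / (v - u) ≤ 1 := by rw [div_le_one (by linarith)]; linarith
  by_cases hPQ : P.2.2 = Q.2.2
  · -- horizontal (or degenerate) edge: z-coordinate constant
    have hc3 : ∀ τ ∈ Icc a b, (T τ).2.2 = P.2.2 := by
      intro τ hτ; rw [hT τ hτ, comp3, ← hPQ]; ring
    by_cases hcz : P.2.2 ∈ Icc z (z + s)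
    · have h1 : P.2.2 - s ≤ u := by
        by_contra h; push_neg at h
        exact havPs ⟨h, by linarith [hcz.2]⟩
      have h2 : v ≤ P.2.2 := by
        by_contra h; push_neg at h
        exact havP ⟨by linarith [hcz.1], h⟩
      have hEq : ∀ w, P.2.2 ∈ Icc w (w + s) →
          {τ ∈ Icc a b | T τ ∈ Cube s x y w} = {τ ∈ Icc a b | T τ ∈ Cube s x y z} := by
        intro w hw
        ext τ
        simp only [mem_setOf_eq]
        constructor
        · rintro ⟨hτ, hc⟩
          rw [mem_cube] at hc
          exact ⟨hτ, mem_cube.2 ⟨hc.1, hc.2.1, by rw [hc3 τ hτ]; exact hcz⟩⟩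
        · rintro ⟨hτ, hc⟩
          rw [mem_cube] at hc
          exact ⟨hτ, mem_cube.2 ⟨hc.1, hc.2.1, by rw [hc3 τ hτ]; exact hw⟩⟩
      rw [hEq u ⟨by linarith, by linarith⟩, hEq v ⟨by linarith [hcz.2], by linarith⟩]
      have hone : ENNReal.ofReal (1 - (z - u) / (v - u)) +
          ENNReal.ofReal ((z - u) / (v - u)) = 1 := by
        rw [← ENNReal.ofReal_add (by linarith) hθ0, sub_add_cancel, ENNReal.ofReal_one]
      refine le_of_eq ?_
      rw [← add_mul, hone, one_mul]
    · have hempty : {τ ∈ Icc a b | T τ ∈ Cube s x y z} = ∅ := by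
        ext τ
        simp only [mem_setOf_eq, mem_empty_iff_false, iff_false, not_and]
        intro hτ hc
        rw [mem_cube] at hc
        exact hcz (hc3 τ hτ ▸ hc.2.2)
      rw [hempty, measure_empty]
      exact zero_le
  · -- z-moving edge
    have hx1 : P.1 = Q.1 := by
      rcases haxis with ⟨h, _⟩ | h; exacts [h, absurd h hPQ]
    have hy1 : P.2.1 = Q.2.1 := by
      rcases haxis with ⟨_, h⟩ | h; exacts [h, absurd h hPQ]
    by_cases hxy : P.1 ∈ Icc x (x + s) ∧ P.2.1 ∈ Icc y (y + s)
    · set d := Q.2.2 - P.2.2 with hd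
      have hdne : d ≠ 0 := sub_ne_zero.2 (Ne.symm hPQ)
      set k := (b - a) / d with hk
      have hkne : k ≠ 0 := div_ne_zero (ne_of_gt hba) hdne
      have hkd : k * d = b - a := by rw [hk]; field_simp
      have hiff : ∀ w τ, τ ∈ Icc a b →
          (T τ ∈ Cube s x y w ↔ P.2.2 + (τ - a) / k ∈ Icc w (w + s)) := by
        intro w τ hτ
        rw [hT τ hτ, mem_cube, comp1, comp2, comp3, ← hx1, ← hy1]
        simp only [sub_self, mul_zero, add_zero]
        have hrew : P.2.2 + (τ - a) / (b - a) * (Q.2.2 - P.2.2) = P.2.2 + (τ - a) / k := by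
          rw [hk, ← hd]
          field_simp
        rw [hrew]
        constructor
        · rintro ⟨_, _, h⟩; exact h
        · intro h; exact ⟨hxy.1, hxy.2, h⟩
      have hset : ∀ w, {τ ∈ Icc a b | T τ ∈ Cube s x y w}
          = {τ ∈ Icc a b | P.2.2 + (τ - a) / k ∈ Icc w (w + s)} := by
        intro w
        ext τ
        simp only [mem_setOf_eq]
        exact ⟨fun ⟨hτ, hc⟩ => ⟨hτ, (hiff w τ hτ).1 hc⟩, fun ⟨hτ, hc⟩ => ⟨hτ, (hiff w τ hτ).2 hc⟩⟩
      rw [hset z, hset u, hset v]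
      rcases lt_or_gt_of_ne hkne with hk0 | hk0
      · rw [zset_neg s z hk0, zset_neg s u hk0, zset_neg s v hk0,
            Real.volume_Icc, Real.volume_Icc, Real.volume_Icc]
        refine key ⟨hu, hv⟩ ?_ ?_
        · intro w hw heq
          have h0 : k * (w - P.2.2 - d) = 0 := by linear_combination heq - hkd
          have hw' : w = Q.2.2 := by
            have := (mul_eq_zero.1 h0).resolve_left hkne
            rw [hd] at this; linarith
          exact havQ (hw' ▸ hw)
        · intro w hw heq
          have h0 : k * (w + s - P.2.2) = 0 := by linear_combination heq
          have hw' : w = P.2.2 - s := by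
            have := (mul_eq_zero.1 h0).resolve_left hkne
            linarith
          exact havPs (hw' ▸ hw)
      · rw [zset_pos s z hk0, zset_pos s u hk0, zset_pos s v hk0,
            Real.volume_Icc, Real.volume_Icc, Real.volume_Icc]
        refine key ⟨hu, hv⟩ ?_ ?_
        · intro w hw heq
          have h0 : k * (w + s - P.2.2 - d) = 0 := by linear_combination heq - hkd
          have hw' : w = Q.2.2 - s := by
            have := (mul_eq_zero.1 h0).resolve_left hkne
            rw [hd] at this; linarith
          exact havQs (hw' ▸ hw)
        · intro w hw heq
          have h0 : k * (w - P.2.2) = 0 := by linear_combination heq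
          have hw' : w = P.2.2 := by
            have := (mul_eq_zero.1 h0).resolve_left hkne
            linarith
          exact havP (hw' ▸ hw)
    · have hempty : {τ ∈ Icc a b | T τ ∈ Cube s x y z} = ∅ := by
        ext τ
        simp only [mem_setOf_eq, mem_empty_iff_false, iff_false, not_and]
        intro hτ hc
        rw [hT τ hτ, mem_cube, comp1, comp2, comp3, ← hx1, ← hy1] at hc
        simp only [sub_self, mul_zero, add_zero] at hc
        exact hxy ⟨hc.1, hc.2.1⟩
      rw [hempty, measure_empty]
      exact zero_le


lemma interval_bound {n : ℕ} (hn : 1 ≤ n) {s : ℝ}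
    {t : Fin (n + 1) → ℝ} (ht : StrictMono t) {p : Fin (n + 1) → ℝ × ℝ × ℝ}
    {T : ℝ → ℝ × ℝ × ℝ}
    (hT : ∀ i : Fin n, ∀ τ ∈ Icc (t i.castSucc) (t i.succ),
      T τ = p i.castSucc +
        ((τ - t i.castSucc) / (t i.succ - t i.castSucc)) • (p i.succ - p i.castSucc))
    (haxis : ∀ i : Fin n,
      ((p i.castSucc).1 = (p i.succ).1 ∧ (p i.castSucc).2.1 = (p i.succ).2.1) ∨
      (p i.castSucc).2.2 = (p i.succ).2.2)
    {x y u v z : ℝ} (hz : z ∈ Ioo u v)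
    (hav : ∀ j : Fin (n + 1), (p j).2.2 ∉ Ioo u v ∧ (p j).2.2 - s ∉ Ioo u v) :
    wgt3 s (t 0) (t (Fin.last n)) T x y z ≤
      max (wgt3 s (t 0) (t (Fin.last n)) T x y u)
          (wgt3 s (t 0) (t (Fin.last n)) T x y v) := by
  obtain ⟨hu, hv⟩ := hz
  have huv : u < v := hu.trans hv
  have hθ0 : 0 ≤ (z - u) / (v - u) := div_nonneg (by linarith) (by linarith)
  have hθ1 : (z - u) / (v - u) ≤ 1 := by rw [div_le_one (by linarith)]; linarith
  have hone : ENNReal.ofReal (1 - (z - u) / (v - u)) +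
      ENNReal.ofReal ((z - u) / (v - u)) = 1 := by
    rw [← ENNReal.ofReal_add (by linarith) hθ0, sub_add_cancel, ENNReal.ofReal_one]
  rw [decomp hn ht hT s x y z, decomp hn ht hT s x y u, decomp hn ht hT s x y v]
  set c1 := ENNReal.ofReal (1 - (z - u) / (v - u)) with hc1
  set c2 := ENNReal.ofReal ((z - u) / (v - u)) with hc2
  set A := ∑ i : Fin n, volume {τ ∈ Icc (t i.castSucc) (t i.succ) | T τ ∈ Cube s x y u}
    with hA
  set B := ∑ i : Fin n, volume {τ ∈ Icc (t i.castSucc) (t i.succ) | T τ ∈ Cube s x y v}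
    with hB
  calc ∑ i : Fin n, volume {τ ∈ Icc (t i.castSucc) (t i.succ) | T τ ∈ Cube s x y z}
      ≤ ∑ i : Fin n,
          (c1 * volume {τ ∈ Icc (t i.castSucc) (t i.succ) | T τ ∈ Cube s x y u} +
           c2 * volume {τ ∈ Icc (t i.castSucc) (t i.succ) | T τ ∈ Cube s x y v}) := by
        refine Finset.sum_le_sum fun i _ => ?_
        have hab : t i.castSucc < t i.succ := ht Fin.castSucc_lt_succ
        have hax : ((p i.castSucc).1 = (p i.succ).1 ∧ (p i.castSucc).2.1 = (p i.succ).2.1) ∨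
            (p i.castSucc).2.2 = (p i.succ).2.2 := haxis i
        exact edge_bound ⟨hu, hv⟩ hab (hT i) hax (hav i.castSucc).1 (hav i.castSucc).2
          (hav i.succ).1 (hav i.succ).2
    _ = c1 * A + c2 * B := by
        rw [Finset.sum_add_distrib, hA, hB, Finset.mul_sum, Finset.mul_sum]
    _ ≤ c1 * max A B + c2 * max A B :=
        add_le_add (mul_le_mul_right (le_max_left _ _) _)
          (mul_le_mul_right (le_max_right _ _) _)
    _ = max A B := by rw [← add_mul, hone, one_mul]

end CubeHotspot

theorem cube_hotspot_eq_sup_face_through_vertex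
    (n : ℕ) (hn : 1 ≤ n) (s : ℝ) (hs : 0 < s)
    (t : Fin (n + 1) → ℝ) (ht : StrictMono t)
    (p : Fin (n + 1) → ℝ × ℝ × ℝ)
    (T : ℝ → ℝ × ℝ × ℝ)
    (hT : ∀ i : Fin n, ∀ τ ∈ Icc (t i.castSucc) (t i.succ),
      T τ = p i.castSucc +
        ((τ - t i.castSucc) / (t i.succ - t i.castSucc)) • (p i.succ - p i.castSucc))
    (haxis : ∀ i : Fin n,
      ((p i.castSucc).1 = (p i.succ).1 ∧ (p i.castSucc).2.1 = (p i.succ).2.1) ∨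
      ((p i.castSucc).1 = (p i.succ).1 ∧ (p i.castSucc).2.2 = (p i.succ).2.2) ∨
      ((p i.castSucc).2.1 = (p i.succ).2.1 ∧ (p i.castSucc).2.2 = (p i.succ).2.2))
    (hzpos : ∀ i : Fin n,
      (p i.castSucc).1 = (p i.succ).1 → (p i.castSucc).2.1 = (p i.succ).2.1 →
        (p i.castSucc).2.2 ≠ (p i.succ).2.2) :
    (⨆ q : ℝ × ℝ × ℝ, wgt3 s (t 0) (t (Fin.last n)) T q.1 q.2.1 q.2.2) =
      ⨆ j : Fin (n + 1), ⨆ q : ℝ × ℝ,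
        ⨆ b ∈ ({(p j).2.2 - s, (p j).2.2} : Set ℝ),
          wgt3 s (t 0) (t (Fin.last n)) T q.1 q.2 b := by
  classical
  have haxis' : ∀ i : Fin n,
      ((p i.castSucc).1 = (p i.succ).1 ∧ (p i.castSucc).2.1 = (p i.succ).2.1) ∨
      (p i.castSucc).2.2 = (p i.succ).2.2 := by
    intro i
    rcases haxis i with h | h | h
    exacts [Or.inl h, Or.inr h.2, Or.inr h.2]
  have hRle : ∀ (w : ℝ), (∃ j : Fin (n + 1), w = (p j).2.2 - s ∨ w = (p j).2.2) →
      ∀ x y : ℝ, wgt3 s (t 0) (t (Fin.last n)) T x y w ≤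
        ⨆ j : Fin (n + 1), ⨆ q : ℝ × ℝ,
          ⨆ b ∈ ({(p j).2.2 - s, (p j).2.2} : Set ℝ),
            wgt3 s (t 0) (t (Fin.last n)) T q.1 q.2 b := by
    rintro w ⟨j, hj⟩ x y
    refine le_iSup_of_le j (le_iSup_of_le (x, y) ?_)
    refine le_iSup₂_of_le w ?_ le_rfl
    rcases hj with h | h <;> simp [h]
  refine le_antisymm (iSup_le ?_) ?_
  · rintro ⟨x, y, z⟩
    dsimp only
    by_cases hzB : ∃ j : Fin (n + 1), z = (p j).2.2 - s ∨ z = (p j).2.2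
    · exact hRle z hzB x y
    · set Bf : Finset ℝ := (Finset.univ.image fun j : Fin (n + 1) => (p j).2.2) ∪
        (Finset.univ.image fun j : Fin (n + 1) => (p j).2.2 - s) with hBf
      have hBmem : ∀ w ∈ Bf, ∃ j : Fin (n + 1), w = (p j).2.2 - s ∨ w = (p j).2.2 := by
        intro w hw
        rw [hBf, Finset.mem_union, Finset.mem_image, Finset.mem_image] at hw
        rcases hw with ⟨j, _, hj⟩ | ⟨j, _, hj⟩
        exacts [⟨j, Or.inr hj.symm⟩, ⟨j, Or.inl hj.symm⟩]
      have hBmem' : ∀ j : Fin (n + 1), (p j).2.2 ∈ Bf ∧ (p j).2.2 - s ∈ Bf := by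
        intro j
        constructor
        · rw [hBf, Finset.mem_union]
          exact Or.inl (Finset.mem_image_of_mem _ (Finset.mem_univ j))
        · rw [hBf, Finset.mem_union]
          exact Or.inr (Finset.mem_image_of_mem _ (Finset.mem_univ j))
      have hBz : z ∉ Bf := fun h => hzB (hBmem z h)
      set L := Bf.filter (· < z) with hL
      set U := Bf.filter (z < ·) with hU
      by_cases hUne : U.Nonempty
      · by_cases hLne : L.Nonempty
        · set u := L.max' hLne with hu
          set v := U.min' hUne with hv
          have hum : u ∈ L := L.max'_mem hLne
          have hvm : v ∈ U := U.min'_mem hUne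
          have huz : u < z := (Finset.mem_filter.1 hum).2
          have hzv : z < v := (Finset.mem_filter.1 hvm).2
          have huB : u ∈ Bf := (Finset.mem_filter.1 hum).1
          have hvB : v ∈ Bf := (Finset.mem_filter.1 hvm).1
          have havoid : ∀ w ∈ Bf, w ∉ Ioo u v := by
            rintro w hw ⟨hw1, hw2⟩
            rcases lt_trichotomy w z with h | h | h
            · have hwL : w ∈ L := Finset.mem_filter.2 ⟨hw, h⟩
              exact absurd (L.le_max' w hwL) (not_le.2 hw1)
            · exact hBz (h ▸ hw)
            · have hwU : w ∈ U := Finset.mem_filter.2 ⟨hw, h⟩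
              exact absurd (U.min'_le w hwU) (not_le.2 hw2)
          have hav : ∀ j : Fin (n + 1), (p j).2.2 ∉ Ioo u v ∧ (p j).2.2 - s ∉ Ioo u v :=
            fun j => ⟨havoid _ (hBmem' j).1, havoid _ (hBmem' j).2⟩
          refine le_trans
            (CubeHotspot.interval_bound hn ht hT haxis' ⟨huz, hzv⟩ hav) ?_
          exact max_le (hRle u (hBmem u huB) x y) (hRle v (hBmem v hvB) x y)
        · -- no breakpoint below z : z is below every breakpoint
          have hall : ∀ j : Fin (n + 1), z + s < (p j).2.2 := by
            intro j
            have hmemB := (hBmem' j).2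
            have h1 : ¬ ((p j).2.2 - s < z) := fun h =>
              hLne ⟨_, Finset.mem_filter.2 ⟨hmemB, h⟩⟩
            push_neg at h1
            have h2 : (p j).2.2 - s ≠ z := fun h => hBz (h ▸ hmemB)
            cases lt_or_eq_of_le h1 with
            | inl h => linarith
            | inr h => exact absurd h.symm h2
          have hempty : {τ ∈ Icc (t 0) (t (Fin.last n)) | T τ ∈ Cube s x y z} = ∅ := by
            refine eq_empty_iff_forall_notMem.2 ?_
            rintro τ ⟨hτ, hc⟩
            obtain ⟨i, hi⟩ := CubeHotspot.cover hn ht hτ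
            have hab : t i.castSucc < t i.succ := ht Fin.castSucc_lt_succ
            have hr := (CubeHotspot.zrange hab (hT i) τ hi).1
            have hc3 := (CubeHotspot.mem_cube.1 hc).2.2
            have hmin : z + s < min (p i.castSucc).2.2 (p i.succ).2.2 :=
              lt_min (hall _) (hall _)
            have := hc3.2
            linarith
          rw [wgt3, hempty, measure_empty]
          exact zero_le
      · -- no breakpoint above z : z is above every breakpoint
        have hall : ∀ j : Fin (n + 1), (p j).2.2 < z := by
          intro j
          have hmemB := (hBmem' j).1
          have h1 : ¬ (z < (p j).2.2) := fun h =>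
            hUne ⟨_, Finset.mem_filter.2 ⟨hmemB, h⟩⟩
          push_neg at h1
          have h2 : (p j).2.2 ≠ z := fun h => hBz (h ▸ hmemB)
          cases lt_or_eq_of_le h1 with
          | inl h => exact h
          | inr h => exact absurd h h2
        have hempty : {τ ∈ Icc (t 0) (t (Fin.last n)) | T τ ∈ Cube s x y z} = ∅ := by
          refine eq_empty_iff_forall_notMem.2 ?_
          rintro τ ⟨hτ, hc⟩
          obtain ⟨i, hi⟩ := CubeHotspot.cover hn ht hτ
          have hab : t i.castSucc < t i.succ := ht Fin.castSucc_lt_succ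
          have hr := (CubeHotspot.zrange hab (hT i) τ hi).2
          have hc3 := (CubeHotspot.mem_cube.1 hc).2.2
          have hmax : max (p i.castSucc).2.2 (p i.succ).2.2 < z :=
            max_lt (hall _) (hall _)
          have := hc3.1
          linarith
        rw [wgt3, hempty, measure_empty]
        exact zero_le
  · refine iSup_le fun j => iSup_le fun q => iSup₂_le fun b hb => ?_
    exact le_iSup (fun q : ℝ × ℝ × ℝ =>
      wgt3 s (t 0) (t (Fin.last n)) T q.1 q.2.1 q.2.2) (q.1, q.2, b)
end
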